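/- arXiv:1411.0935 — 7 statements merged into one kernel-verified Lean document; each statement's English description precedes it below -/
import Mathlib

section
/- Let M be a matroid of rank r on a finite ground set E, and let X ⊆ E with |X| = r be dependent in M. Then there exists a collection Z of flats of M with |Z| ≤ 2 such that every dependent set Y ∈ N(X) ∪ {X} (with |Y| = r) is covered by some flat in Z, i.e. there is F ∈ Z with |F ∩ Y| > r_M(F). -/
open Filter
open scoped symmDiff

variable {α : Type*}

/-- The rank of a matroid: the common cardinality of its bases. -/
noncomputable def Matroid.rnk (M : Matroid α) : ℕ :=
  sSup {k | ∃ B, M.IsBase B ∧ B.ncard = k}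

/-- The rank function of a matroid. -/
noncomputable def Matroid.rkFun (M : Matroid α) (X : Set α) : ℕ :=
  sSup {k | ∃ I, I ⊆ X ∧ M.Indep I ∧ I.ncard = k}

/-- A circuit: a minimal dependent set. -/
def Matroid.IsCircuitSet (M : Matroid α) (C : Set α) : Prop :=
  M.Dep C ∧ ∀ D ⊂ C, M.Indep D

/-- A cocircuit: a circuit of the dual. -/
def Matroid.IsCocircuitSet (M : Matroid α) (D : Set α) : Prop :=
  M✶.IsCircuitSet D

/-- A matroid is paving if every circuit has cardinality at least the rank. -/
def Matroid.Paving (M : Matroid α) : Prop :=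
  ∀ C, M.IsCircuitSet C → M.rnk ≤ C.ncard

/-- Sparse paving: both the matroid and its dual are paving. -/
def Matroid.SparsePaving (M : Matroid α) : Prop :=
  M.Paving ∧ M✶.Paving

/-- A matroid has no loops iff every singleton of the ground set is independent. -/
def Matroid.LoopFree (M : Matroid α) : Prop :=
  ∀ e ∈ M.E, M.Indep {e}

/-- A matroid has no coloops iff its dual has no loops. -/
def Matroid.ColoopFree (M : Matroid α) : Prop :=
  M✶.LoopFree

/-- A flat: a set whose rank increases upon adding any element of the ground set outside it. -/
def Matroid.IsFlatSet (M : Matroid α) (F : Set α) : Prop :=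
  F ⊆ M.E ∧ ∀ e ∈ M.E \ F, M.rkFun F < M.rkFun (F ∪ {e})

/-- The number of matroids on ground set `{1, …, n}`. -/
noncomputable def numMatroids (n : ℕ) : ℕ :=
  Nat.card {M : Matroid (Fin n) // M.E = Set.univ}

/-- The number of sparse paving matroids on ground set `{1, …, n}`. -/
noncomputable def numSparsePaving (n : ℕ) : ℕ :=
  Nat.card {M : Matroid (Fin n) // M.E = Set.univ ∧ M.SparsePaving}

/-- The number of loopless, coloopless matroids on ground set `{1, …, n}`. -/
noncomputable def numMatroidsNoLoopColoop (n : ℕ) : ℕ :=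
  Nat.card {M : Matroid (Fin n) // M.E = Set.univ ∧ M.LoopFree ∧ M.ColoopFree}

/-- Number of rank-`r` loopless, coloopless matroids on `{1, …, n}`. -/
noncomputable def numMatroidsNoLoopColoopRk (n r : ℕ) : ℕ :=
  Nat.card {M : Matroid (Fin n) // M.E = Set.univ ∧ M.rnk = r ∧ M.LoopFree ∧ M.ColoopFree}

/-- Number of rank-`r` sparse paving matroids on `{1, …, n}`. -/
noncomputable def numSparsePavingRk (n r : ℕ) : ℕ :=
  Nat.card {M : Matroid (Fin n) // M.E = Set.univ ∧ M.rnk = r ∧ M.SparsePaving}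

/-- The Johnson graph `J(E, r)` on the `r`-element subsets of a type. -/
def johnsonGraph (α : Type*) [DecidableEq α] (r : ℕ) :
    SimpleGraph {X : Finset α // X.card = r} where
  Adj X Y := (X.1 ∆ Y.1).card = 2
  symm := by constructor; intro X Y h; rwa [symmDiff_comm]
  loopless := by constructor; intro X h; simp [symmDiff_self] at h

/-- A stable (independent) set of vertices in a graph. -/
def SimpleGraph.IsStableSet {V : Type*} (G : SimpleGraph V) (s : Set V) : Prop :=
  ∀ ⦃x⦄, x ∈ s → ∀ ⦃y⦄, y ∈ s → ¬ G.Adj x y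

/-- The number of stable sets of a graph. -/
noncomputable def numStableSets {V : Type*} (G : SimpleGraph V) : ℕ :=
  Nat.card {s : Set V // G.IsStableSet s}

section AuxLocalCover

variable {M : Matroid α}

private lemma aux_rkFun_bddAbove (M : Matroid α) [M.Finite] (X : Set α) :
    BddAbove {k | ∃ I, I ⊆ X ∧ M.Indep I ∧ I.ncard = k} := by
  refine ⟨M.E.ncard, ?_⟩
  rintro k ⟨I, -, hI, rfl⟩
  exact Set.ncard_le_ncard hI.subset_ground M.ground_finite

private lemma aux_le_rkFun (M : Matroid α) [M.Finite] {I X : Set α} (hI : M.Indep I)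
    (hIX : I ⊆ X) : I.ncard ≤ M.rkFun X :=
  le_csSup (aux_rkFun_bddAbove M X) ⟨I, hIX, hI, rfl⟩

private lemma aux_rkFun_basis (M : Matroid α) [M.Finite] {I X : Set α}
    (hI : M.IsBasis I X) : M.rkFun X = I.ncard := by
  refine le_antisymm (csSup_le ⟨0, ∅, Set.empty_subset X, M.empty_indep, by simp⟩ ?_)
    (aux_le_rkFun M hI.indep hI.subset)
  rintro k ⟨J, hJX, hJ, rfl⟩
  obtain ⟨J', hJ', hJJ'⟩ := hJ.subset_isBasis_of_subset hJX hI.subset_ground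
  have h1 : J'.ncard = I.ncard := by
    rw [Set.ncard_def, hJ'.encard_eq_encard hI, ← Set.ncard_def]
  have hJ'fin : J'.Finite := M.set_finite J' hJ'.indep.subset_ground
  exact (Set.ncard_le_ncard hJJ' hJ'fin).trans h1.le

private lemma aux_isFlatSet_closure (M : Matroid α) [M.Finite] (X : Set α) :
    M.IsFlatSet (M.closure X) := by
  refine ⟨M.closure_subset_ground X, fun e he => ?_⟩
  obtain ⟨I, hI⟩ := M.exists_isBasis (M.closure X) (M.closure_subset_ground X)
  have hIcl : M.closure I = M.closure X := by
    rw [hI.closure_eq_closure, Matroid.closure_closure]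
  have heI : e ∉ I := fun h => he.2 (hI.subset h)
  have hins : M.Indep (insert e I) := by
    rw [hI.indep.insert_indep_iff_of_notMem heI, hIcl]
    exact he
  have hIfin : I.Finite := M.set_finite I hI.indep.subset_ground
  have h1 : (insert e I).ncard = I.ncard + 1 := Set.ncard_insert_of_notMem heI hIfin
  have h2 : (insert e I).ncard ≤ M.rkFun (M.closure X ∪ {e}) := by
    refine aux_le_rkFun M hins ?_
    rw [Set.union_singleton]
    exact Set.insert_subset_insert hI.subset
  rw [aux_rkFun_basis M hI]
  omega

private lemma aux_closure_diff (M : Matroid α) {J : Set α} (hJ : M.Indep J) {e : α}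
    {T : Set α} (hTfin : T.Finite) :
    T ⊆ J → (∀ x ∈ T, e ∈ M.closure (J \ {x})) → e ∈ M.closure J → e ∈ M.closure (J \ T) := by
  induction T, hTfin using Set.Finite.induction_on with
  | empty => intro _ _ h; simpa
  | @insert a s has hsfin ih =>
    intro hsub hall hecl
    have haJ : a ∈ J := hsub (Set.mem_insert a s)
    have h1 : e ∈ M.closure (J \ s) :=
      ih ((Set.subset_insert a s).trans hsub) (fun x hx => hall x (Set.mem_insert_of_mem _ hx))
        hecl
    set A := J \ insert a s with hA
    have hAeq : J \ s = insert a A := by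
      ext z
      simp only [hA, Set.mem_diff, Set.mem_insert_iff, Set.mem_singleton_iff]
      constructor
      · rintro ⟨hzJ, hzs⟩
        by_cases hz : z = a
        · exact Or.inl hz
        · exact Or.inr ⟨hzJ, by tauto⟩
      · rintro (rfl | ⟨hzJ, hz⟩)
        · exact ⟨haJ, has⟩
        · exact ⟨hzJ, fun h => hz (Or.inr h)⟩
    by_contra hne
    rw [hAeq] at h1
    have hex : a ∈ M.closure (insert e A) := (M.closure_exchange ⟨h1, hne⟩).1
    have h2 : e ∈ M.closure (J \ {a}) := hall a (Set.mem_insert a s)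
    have hsub2 : insert e A ⊆ M.closure (J \ {a}) := by
      refine Set.insert_subset h2 ?_
      refine (Set.diff_subset_diff_right ?_).trans
        (M.subset_closure (J \ {a}) (Set.diff_subset.trans hJ.subset_ground))
      simp
    have : a ∈ M.closure (J \ {a}) :=
      M.closure_subset_closure_of_subset_closure hsub2 hex
    exact hJ.notMem_closure_diff_of_mem haJ this

end AuxLocalCover

/-- a dependent `r`-set `X` admits a local cover by at most two flats:
every dependent `Y ∈ N(X) ∪ {X}` satisfies `|F ∩ Y| > r_M(F)` for some `F` in the cover. -/
theorem exists_local_cover {α : Type*} (M : Matroid α) [M.Finite] (r : ℕ)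
    (hr : M.rnk = r) (X : Set α) (hXcard : X.ncard = r) (hdep : M.Dep X) :
    ∃ Z : Set (Set α), Z.ncard ≤ 2 ∧ (∀ F ∈ Z, M.IsFlatSet F) ∧
      ∀ Y : Set α, (Y = X ∨ ∃ x ∈ X, ∃ y ∈ M.E \ X, Y = insert y (X \ {x})) →
        M.Dep Y → ∃ F ∈ Z, M.rkFun F < (F ∩ Y).ncard := by
  have hXE : X ⊆ M.E := hdep.subset_ground
  have hEfin : M.E.Finite := M.ground_finite
  have hXfin : X.Finite := hEfin.subset hXE
  obtain ⟨J, hJ⟩ := M.exists_isBasis X hXE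
  have hJX : J ⊆ X := hJ.subset
  have hJfin : J.Finite := hXfin.subset hJX
  have hJne : J ≠ X := fun h => hdep.not_indep (h ▸ hJ.indep)
  have hk : J.ncard < r := by
    rw [← hXcard]
    exact Set.ncard_lt_ncard (hJX.ssubset_of_ne hJne) hXfin
  have hrkX : M.rkFun (M.closure X) = J.ncard := aux_rkFun_basis M hJ.isBasis_closure_right
  have hXsubcl : X ⊆ M.closure X := M.subset_closure X hXE
  have hclXfin : (M.closure X).Finite := hEfin.subset (M.closure_subset_ground X)
  have hcovX : ∀ Y : Set α, ∀ A : Set α, A ⊆ M.closure X ∩ Y → J.ncard < A.ncard →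
      M.rkFun (M.closure X) < (M.closure X ∩ Y).ncard := by
    intro Y A hA hgt
    rw [hrkX]
    exact hgt.trans_le (Set.ncard_le_ncard hA (hclXfin.inter_of_left Y))
  have hXgt : J.ncard < X.ncard := by rw [hXcard]; exact hk
  by_cases hcase : J.ncard + 1 < r
  · refine ⟨{M.closure X}, by simp, ?_, ?_⟩
    · intro F hF
      rw [Set.mem_singleton_iff] at hF
      subst hF
      exact aux_isFlatSet_closure M X
    rintro Y (rfl | ⟨x, hx, y, hy, rfl⟩) hYdep
    · exact ⟨_, Set.mem_singleton _,
        hcovX _ _ (Set.subset_inter hXsubcl subset_rfl) hXgt⟩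
    · refine ⟨_, Set.mem_singleton _, hcovX _ (X \ {x}) ?_ ?_⟩
      · exact Set.subset_inter (Set.diff_subset.trans hXsubcl) (Set.subset_insert _ _)
      · rw [Set.ncard_diff_singleton_of_mem hx, hXcard]
        omega
  · have hr1 : J.ncard + 1 = r := by omega
    have hdiff : (X \ J).ncard = 1 := by
      rw [Set.ncard_diff hJX hJfin, hXcard]
      omega
    obtain ⟨e, he⟩ := Set.ncard_eq_one.mp hdiff
    have heXJ : e ∈ X \ J := by rw [he]; exact Set.mem_singleton e
    have heX : e ∈ X := heXJ.1
    have heJ : e ∉ J := heXJ.2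
    have hXeq : X = insert e J := by
      ext z
      simp only [Set.mem_insert_iff]
      constructor
      · intro hz
        by_cases hzJ : z ∈ J
        · exact Or.inr hzJ
        · left
          have hzXJ : z ∈ X \ J := ⟨hz, hzJ⟩
          rw [he] at hzXJ
          exact hzXJ
      · rintro (rfl | hz)
        · exact heX
        · exact hJX hz
    have heE : e ∈ M.E := hXE heX
    have hecl : e ∈ M.closure J := hJ.subset_closure heX
    set T : Set α := {x | x ∈ J ∧ e ∈ M.closure (J \ {x})} with hT
    have hTJ : T ⊆ J := fun x hx => hx.1
    set IC : Set α := J \ T with hICdef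
    have heIC : e ∉ IC := fun h => heJ h.1
    have hICindep : M.Indep IC := hJ.indep.subset Set.diff_subset
    have heclIC : e ∈ M.closure IC :=
      aux_closure_diff M hJ.indep (hJfin.subset hTJ) hTJ (fun x hx => hx.2) hecl
    set C : Set α := insert e IC with hCdef
    have hCX : C ⊆ X := by
      rw [hXeq]; exact Set.insert_subset_insert Set.diff_subset
    have hCE : C ⊆ M.E := hCX.trans hXE
    have hICfin : IC.Finite := hJfin.subset Set.diff_subset
    have hICbasis : M.IsBasis IC C :=
      hICindep.isBasis_of_subset_of_subset_closure (Set.subset_insert e IC)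
        (Set.insert_subset heclIC (M.subset_closure IC hICindep.subset_ground))
    have hrkC : M.rkFun (M.closure C) = IC.ncard :=
      aux_rkFun_basis M hICbasis.isBasis_closure_right
    have hCcard : C.ncard = IC.ncard + 1 := Set.ncard_insert_of_notMem heIC hICfin
    refine ⟨{M.closure X, M.closure C}, ?_, ?_, ?_⟩
    · exact (Set.ncard_insert_le _ _).trans (by simp)
    · intro F hF
      simp only [Set.mem_insert_iff, Set.mem_singleton_iff] at hF
      rcases hF with rfl | rfl
      · exact aux_isFlatSet_closure M X
      · exact aux_isFlatSet_closure M C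
    rintro Y (rfl | ⟨x, hx, y, hy, rfl⟩) hYdep
    · exact ⟨_, Set.mem_insert _ _,
        hcovX _ _ (Set.subset_inter hXsubcl subset_rfl) hXgt⟩
    · by_cases hycl : y ∈ M.closure X
      · refine ⟨_, Set.mem_insert _ _,
          hcovX _ _ (Set.subset_inter ?_ subset_rfl) ?_⟩
        · exact Set.insert_subset hycl (Set.diff_subset.trans hXsubcl)
        · have hyXx : y ∉ X \ {x} := fun h => hy.2 h.1
          rw [Set.ncard_insert_of_notMem hyXx (hXfin.subset Set.diff_subset),
            Set.ncard_diff_singleton_of_mem hx, hXcard]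
          omega
      · have hyXx : y ∉ X \ {x} := fun h => hy.2 h.1
        have hXxdep : ¬ M.Indep (X \ {x}) := by
          intro hind
          refine hYdep.not_indep ?_
          rw [hind.insert_indep_iff_of_notMem hyXx]
          exact ⟨hy.1, fun h => hycl (M.closure_subset_closure Set.diff_subset h)⟩
        have hxC : x ∉ C := by
          intro hxC
          rcases Set.mem_insert_iff.mp hxC with rfl | hxIC
          · refine hXxdep ?_
            rw [hXeq, Set.insert_diff_self_of_notMem heJ]
            exact hJ.indep
          · have hxJ : x ∈ J := hxIC.1
            have hxT : x ∉ T := hxIC.2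
            have hnecl : e ∉ M.closure (J \ {x}) := fun h => hxT ⟨hxJ, h⟩
            have hxe : x ≠ e := fun h => heJ (h ▸ hxJ)
            have hXxeq : X \ {x} = insert e (J \ {x}) := by
              rw [hXeq]
              ext z
              simp only [Set.mem_diff, Set.mem_insert_iff, Set.mem_singleton_iff]
              constructor
              · rintro ⟨(rfl | hzJ), hzx⟩
                · exact Or.inl rfl
                · exact Or.inr ⟨hzJ, hzx⟩
              · rintro (rfl | ⟨hzJ, hzx⟩)
                · exact ⟨Or.inl rfl, fun h => hxe h.symm⟩
                · exact ⟨Or.inr hzJ, hzx⟩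
            refine hXxdep ?_
            rw [hXxeq, (hJ.indep.subset Set.diff_subset).insert_indep_iff_of_notMem
              (fun h => heJ h.1)]
            exact ⟨heE, hnecl⟩
        have hCY : C ⊆ insert y (X \ {x}) := fun z hz =>
          Set.mem_insert_of_mem _
            ⟨hCX hz, fun h => hxC (by rwa [Set.mem_singleton_iff.mp h] at hz)⟩
        refine ⟨M.closure C, Set.mem_insert_of_mem _ rfl, ?_⟩
        rw [hrkC]
        have hsub : C ⊆ M.closure C ∩ insert y (X \ {x}) :=
          Set.subset_inter (M.subset_closure C hCE) hCY
        have hfin : (M.closure C ∩ insert y (X \ {x})).Finite :=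
          (hEfin.subset (M.closure_subset_ground C)).inter_of_left _
        have hle := Set.ncard_le_ncard hsub hfin
        omega
end

section
/- Let n and k be natural numbers with k < ⌊n/2⌋. Then C(n, ⌊n/2⌋ − k) ≤ C(n, ⌊n/2⌋) · 2^{−k²/(⌈n/2⌉ + k)}, where the right-hand side is interpreted as a real number and 2^{−k²/(⌈n/2⌉+k)} is a real power with real exponent −k²/(⌈n/2⌉+k). -/
open Filter
open scoped symmDiff

variable {α : Type*}

lemma one_sub_le_rpow_neg (x : ℝ) (hx : 0 ≤ x) : 1 - x ≤ (2:ℝ) ^ (-x) := by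
  rw [Real.rpow_def_of_pos (by norm_num : (0:ℝ) < 2)]
  have h1 := Real.add_one_le_exp (Real.log 2 * (-x))
  have hlog1 : Real.log 2 ≤ 1 := by
    have := Real.log_le_sub_one_of_pos (by norm_num : (0:ℝ) < 2); linarith
  have hlog0 : 0 ≤ Real.log 2 := Real.log_nonneg (by norm_num)
  nlinarith

/-- `C(n, ⌊n/2⌋ − k) ≤ C(n, ⌊n/2⌋) · 2^{−k²/(⌈n/2⌉+k)}` for `k < ⌊n/2⌋`. -/
theorem choose_floor_sub_le (n k : ℕ) (hk : k < n / 2) :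
    (n.choose (n / 2 - k) : ℝ) ≤
      (n.choose (n / 2) : ℝ) *
        2 ^ (-((k : ℝ) ^ 2 / ((((n + 1) / 2 : ℕ) : ℝ) + (k : ℝ)))) := by
  set m := n / 2 with hm
  set c := (n + 1) / 2 with hc
  have hcm : m + c = n := by omega
  have hmc : m ≤ c := by omega
  have key : ∀ j, j ≤ m → (n.choose (m - j) : ℝ) ≤
      (n.choose m : ℝ) * 2 ^ (-((j : ℝ) ^ 2 / ((c : ℝ) + (j : ℝ)))) := by
    intro j
    induction j with
    | zero => intro _; simp
    | succ j ih =>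
      intro hj
      have hjm : j ≤ m := by omega
      have ihj := ih hjm
      have hc1 : 1 ≤ c := by omega
      have hC : (1:ℝ) ≤ (c:ℝ) := by exact_mod_cast hc1
      have hK : (0:ℝ) ≤ (j:ℝ) := by positivity
      have hden : (0:ℝ) < (c:ℝ) + j + 1 := by linarith
      have hden' : (0:ℝ) < (c:ℝ) + j := by linarith
      -- the recurrence
      have hrec : (n.choose (m - (j+1)) : ℝ) * ((c:ℝ) + j + 1)
          = (n.choose (m - j) : ℝ) * ((m:ℝ) - j) := by
        have h1 : (m - (j+1)) + 1 = m - j := by omega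
        have h2 : n - (m - (j+1)) = c + (j+1) := by omega
        have := Nat.choose_succ_right_eq n (m - (j+1))
        rw [h1, h2] at this
        have := congrArg (fun x : ℕ => (x : ℝ)) this
        push_cast at this
        have hjm' : (j:ℝ) ≤ (m:ℝ) := by exact_mod_cast hjm
        push_cast
        rw [Nat.cast_sub hjm] at this
        linarith
      have heq : (n.choose (m - (j+1)) : ℝ)
          = (n.choose (m - j) : ℝ) * (((m:ℝ) - j) / ((c:ℝ) + j + 1)) := by
        field_simp
        linarith [hrec]
      -- step factor bound
      have hx0 : (0:ℝ) ≤ (2*(j:ℝ)+1) / ((c:ℝ) + j + 1) := by positivity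
      have hstep : ((m:ℝ) - j) / ((c:ℝ) + j + 1)
          ≤ (2:ℝ) ^ (-((2*(j:ℝ)+1) / ((c:ℝ) + j + 1))) := by
        have hmC : (m:ℝ) ≤ (c:ℝ) := by exact_mod_cast hmc
        have h1 : ((m:ℝ) - j) / ((c:ℝ) + j + 1) ≤ 1 - (2*(j:ℝ)+1) / ((c:ℝ) + j + 1) := by
          have he : 1 - (2*(j:ℝ)+1) / ((c:ℝ) + j + 1) = ((c:ℝ) - j) / ((c:ℝ) + j + 1) := by
            field_simp
            ring
          rw [he]
          gcongr

        calc ((m:ℝ) - j) / ((c:ℝ) + j + 1) ≤ 1 - (2*(j:ℝ)+1) / ((c:ℝ) + j + 1) := h1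
          _ ≤ (2:ℝ) ^ (-((2*(j:ℝ)+1) / ((c:ℝ) + j + 1))) := one_sub_le_rpow_neg _ hx0
      -- exponent arithmetic
      have hexp : -((j:ℝ)^2 / ((c:ℝ) + j)) + -((2*(j:ℝ)+1) / ((c:ℝ) + j + 1))
          ≤ -(((j:ℝ)+1)^2 / ((c:ℝ) + ((j:ℝ)+1))) := by
        have h1 : (j:ℝ)^2 / ((c:ℝ) + j + 1) ≤ (j:ℝ)^2 / ((c:ℝ) + j) := by
          apply div_le_div_of_nonneg_left (by positivity) hden'
          linarith
        have h2 : ((j:ℝ)+1)^2 / ((c:ℝ) + j + 1)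
            = (j:ℝ)^2 / ((c:ℝ) + j + 1) + (2*(j:ℝ)+1) / ((c:ℝ) + j + 1) := by
          rw [← add_div]; ring_nf
        have h3 : (c:ℝ) + ((j:ℝ)+1) = (c:ℝ) + j + 1 := by ring
        rw [h3, h2]
        linarith
      have hmul : (2:ℝ) ^ (-((j:ℝ)^2 / ((c:ℝ) + j))) * (2:ℝ) ^ (-((2*(j:ℝ)+1) / ((c:ℝ) + j + 1)))
          ≤ (2:ℝ) ^ (-(((j:ℝ)+1)^2 / ((c:ℝ) + ((j:ℝ)+1)))) := by
        rw [← Real.rpow_add (by norm_num : (0:ℝ) < 2)]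
        exact Real.rpow_le_rpow_of_exponent_le (by norm_num) hexp
      have hB : (0:ℝ) ≤ (n.choose m : ℝ) := by positivity
      have hx : (0:ℝ) ≤ ((m:ℝ) - j) / ((c:ℝ) + j + 1) := by
        apply div_nonneg _ (le_of_lt hden)
        have : (j:ℝ) ≤ (m:ℝ) := by exact_mod_cast hjm
        linarith
      have hpow0 : (0:ℝ) ≤ (2:ℝ) ^ (-((j:ℝ)^2 / ((c:ℝ) + j))) := by positivity
      calc (n.choose (m - (j+1)) : ℝ)
          = (n.choose (m - j) : ℝ) * (((m:ℝ) - j) / ((c:ℝ) + j + 1)) := heq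
        _ ≤ ((n.choose m : ℝ) * 2 ^ (-((j : ℝ) ^ 2 / ((c : ℝ) + (j : ℝ))))) *
              (((m:ℝ) - j) / ((c:ℝ) + j + 1)) := by
            apply mul_le_mul_of_nonneg_right ihj hx
        _ ≤ ((n.choose m : ℝ) * 2 ^ (-((j : ℝ) ^ 2 / ((c : ℝ) + (j : ℝ))))) *
              (2:ℝ) ^ (-((2*(j:ℝ)+1) / ((c:ℝ) + j + 1))) := by
            apply mul_le_mul_of_nonneg_left hstep (by positivity)
        _ = (n.choose m : ℝ) * ((2:ℝ) ^ (-((j:ℝ)^2 / ((c:ℝ) + j))) *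
              (2:ℝ) ^ (-((2*(j:ℝ)+1) / ((c:ℝ) + j + 1)))) := by ring
        _ ≤ (n.choose m : ℝ) * (2:ℝ) ^ (-(((j:ℝ)+1)^2 / ((c:ℝ) + ((j:ℝ)+1)))) := by
            apply mul_le_mul_of_nonneg_left hmul hB
        _ = (n.choose m : ℝ) * 2 ^ (-(((j+1 : ℕ) : ℝ) ^ 2 / ((c : ℝ) + ((j+1:ℕ) : ℝ)))) := by
            push_cast; ring_nf
  exact key k hk.le
end

section
/- There exists a constant c > 0 such that for all sufficiently large n and all integers r with 1 ≤ r ≤ n/2, Σ_{k=0}^{2⌈σ̃_{n,r} N⌉} C(2^n(n+1), k) ≤ 2^{c (log n)²/n² · C(n, ⌊n/2⌋)}, where N = C(n,r), σ̃_{n,r} = ln(r(n−r)+1)/(r(n−r+1)) + 1/((r+1)(n−r+1)), and the right-hand side is a real power of 2. -/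
open Filter
open scoped symmDiff

variable {α : Type*}

open Finset Real Nat

lemma aux_sum_choose (m K : ℕ) :
    ∑ k ∈ Finset.range (K+1), m.choose k ≤ (m+K).choose K := by
  rw [Nat.add_choose_eq, Finset.Nat.sum_antidiagonal_eq_sum_range_succ_mk]
  refine Finset.sum_le_sum fun i hi => ?_
  have : 1 ≤ K.choose (K - i) := Nat.choose_pos (Nat.sub_le _ _)
  calc m.choose i = m.choose i * 1 := (mul_one _).symm
    _ ≤ m.choose i * K.choose (K - i) := Nat.mul_le_mul_left _ this

lemma aux_pow_le_exp_mul_factorial (K : ℕ) :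
    (K : ℝ) ^ K ≤ Real.exp 1 ^ K * K ! := by
  have h1 : (K : ℝ) ^ K / K ! ≤ Real.exp K := by
    calc (K : ℝ) ^ K / K ! ≤ ∑ i ∈ Finset.range (K+1), (K : ℝ) ^ i / i ! := by
          refine Finset.single_le_sum (f := fun i => (K:ℝ)^i / i !) (fun i _ => by positivity)
            (Finset.self_mem_range_succ K)
      _ ≤ Real.exp K := Real.sum_le_exp_of_nonneg (by positivity) _
  have h2 : Real.exp (K : ℝ) = Real.exp 1 ^ K := by
    rw [← Real.exp_nat_mul]; norm_num
  have hfac : (0:ℝ) < K ! := by positivity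
  calc (K:ℝ)^K = ((K:ℝ)^K / K !) * K ! := by field_simp
    _ ≤ Real.exp 1 ^ K * K ! := by
        apply mul_le_mul_of_nonneg_right _ hfac.le
        rw [← h2]; exact h1

lemma aux_choose_le (m K : ℕ) (hK : 1 ≤ K) :
    ((m).choose K : ℝ) ≤ (Real.exp 1 * m / K) ^ K := by
  have hK0 : (0:ℝ) < K := by exact_mod_cast hK
  have h1 : ((m).choose K : ℝ) ≤ (m:ℝ)^K / K ! := Nat.choose_le_pow_div K m
  refine h1.trans ?_
  rw [div_pow, mul_pow]
  rw [div_le_div_iff₀ (by positivity) (by positivity)]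
  calc (m:ℝ)^K * (K:ℝ)^K ≤ (m:ℝ)^K * (Real.exp 1 ^ K * K !) := by
        apply mul_le_mul_of_nonneg_left (aux_pow_le_exp_mul_factorial K) (by positivity)
    _ = Real.exp 1 ^ K * (m:ℝ)^K * K ! := by ring

lemma aux_pq (P Q A : ℝ) (hP : 0 < P) (hPQ : P ≤ Q) (hA : Real.logb 2 Q ≤ A) :
    P * (A - Real.logb 2 P) ≤ Q * (A - Real.logb 2 Q) + 2 * Q := by
  have hQ : 0 < Q := hP.trans_le hPQ
  have key : P * (Real.logb 2 Q - Real.logb 2 P) ≤ 2 * Q := by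
    have h1 : Real.logb 2 Q - Real.logb 2 P = Real.log (Q/P) / Real.log 2 := by
      rw [Real.log_div hQ.ne' hP.ne']; simp [Real.logb, sub_div]
    have h2 : Real.log (Q/P) ≤ Q/P - 1 := Real.log_le_sub_one_of_pos (by positivity)
    have hlog2 : (0.6:ℝ) < Real.log 2 := by
      have := Real.log_two_gt_d9; linarith
    rw [h1]
    have : Real.log (Q / P) / Real.log 2 ≤ (Q/P) / 0.6 := by
      apply div_le_div₀ (by positivity) (h2.trans (by linarith [div_pos hQ hP])) (by norm_num)
      · linarith
    calc P * (Real.log (Q/P) / Real.log 2) ≤ P * ((Q/P)/0.6) :=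
          mul_le_mul_of_nonneg_left this hP.le
      _ = Q / 0.6 := by field_simp
      _ ≤ 2 * Q := by rw [div_le_iff₀ (by norm_num)]; linarith
  have h3 : P * (A - Real.logb 2 Q) ≤ Q * (A - Real.logb 2 Q) := by
    apply mul_le_mul_of_nonneg_right hPQ; linarith
  nlinarith [key, h3]

lemma aux_pow4 (n : ℕ) (hn : 16 ≤ n) : n^4 ≤ 2^n := by
  induction n with
  | zero => omega
  | succ k ih =>
    rcases Nat.lt_or_ge k 16 with hk | hk
    · have hk15 : k = 15 := by omega
      subst hk15; norm_num
    · have h1 := ih hk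
      have : (k+1)^4 ≤ 2 * k^4 := by
        have h2 : 16 * k^3 ≤ k * k^3 := Nat.mul_le_mul_right _ hk
        have h3 : k^2 ≤ k^3 := Nat.pow_le_pow_right (by omega) (by omega)
        have h4 : k ≤ k^3 := Nat.le_self_pow (by omega) k
        have h5 : 1 ≤ k^3 := Nat.one_le_iff_ne_zero.mpr (by positivity)
        nlinarith [h2, h3, h4, h5]
      calc (k+1)^4 ≤ 2 * k^4 := this
        _ ≤ 2 * 2^k := by omega
        _ = 2^(k+1) := by ring

lemma aux_two_pow_le (n : ℕ) : 2^n ≤ (n+1) * n.choose (n/2) := by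
  calc 2^n = ∑ m ∈ Finset.range (n+1), n.choose m := (Nat.sum_range_choose n).symm
    _ ≤ ∑ m ∈ Finset.range (n+1), n.choose (n/2) :=
        Finset.sum_le_sum fun i _ => Nat.choose_le_middle i n
    _ = (n+1) * n.choose (n/2) := by rw [Finset.sum_const, Finset.card_range, smul_eq_mul]

lemma aux_mid_le_two_pow (n : ℕ) : n.choose (n/2) ≤ 2^n := by
  rw [← Nat.sum_range_choose n]
  exact Finset.single_le_sum (fun i _ => Nat.zero_le _)
    (Finset.mem_range.mpr (by omega))

lemma aux_identity (n r : ℕ) (hr : r ≤ n) :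
    (n+1) * (n+2) * n.choose r = (r+1) * (n-r+1) * (n+2).choose (r+1) := by
  have h1 : (n+1) * n.choose r = (n+1).choose (r+1) * (r+1) := Nat.add_one_mul_choose_eq n r
  have h2 : (n+1).choose (r+1) * (n+2) = (n+2).choose (r+1) * (n + 2 - (r+1)) :=
    Nat.choose_mul_succ_eq (n+1) (r+1)
  have h3 : n + 2 - (r+1) = n - r + 1 := by omega
  calc (n+1) * (n+2) * n.choose r = ((n+1) * n.choose r) * (n+2) := by ring
    _ = (n+1).choose (r+1) * (r+1) * (n+2) := by rw [h1]
    _ = ((n+1).choose (r+1) * (n+2)) * (r+1) := by ring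
    _ = (n+2).choose (r+1) * (n - r + 1) * (r+1) := by rw [h2, h3]
    _ = (r+1) * (n-r+1) * (n+2).choose (r+1) := by ring

lemma aux_choose_le_4mid (n r : ℕ) (hr : 1 ≤ r) :
    (n+2).choose (r+1) ≤ 4 * n.choose (n/2) := by
  obtain ⟨s, rfl⟩ : ∃ s, r = s + 1 := ⟨r - 1, by omega⟩
  have e1 : (n+2).choose (s+2)
      = n.choose s + n.choose (s+1) + (n.choose (s+1) + n.choose (s+2)) := by
    rw [Nat.choose_succ_succ (n+1) (s+1), Nat.choose_succ_succ n s, Nat.choose_succ_succ n (s+1)]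
  rw [e1]
  have := Nat.choose_le_middle s n
  have := Nat.choose_le_middle (s+1) n
  have := Nat.choose_le_middle (s+2) n
  omega

lemma aux_M_ge_sq (n : ℕ) (hn : 16 ≤ n) : n^2 ≤ n.choose (n/2) := by
  have h1 := aux_pow4 n hn
  have h2 := aux_two_pow_le n
  have h3 : (n+1) * n^2 ≤ n^4 := by
    have h5 : n + 1 ≤ n^2 := by nlinarith
    calc (n+1) * n^2 ≤ n^2 * n^2 := Nat.mul_le_mul_right _ h5
      _ = n^4 := by ring
  have h4 : (n+1) * n^2 ≤ (n+1) * n.choose (n/2) := by omega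
  exact Nat.le_of_mul_le_mul_left h4 (by omega)

set_option maxHeartbeats 2000000 in
/-- a bound, uniform in `r ≤ n/2`, on `Σ_{k=0}^{2⌈σ̃_{n,r}N⌉} C(2^n(n+1),k)`. -/
theorem sum_choose_le_uniform :
    ∃ c : ℝ, 0 < c ∧ ∀ᶠ n : ℕ in Filter.atTop, ∀ r : ℕ, 1 ≤ r → 2 * r ≤ n →
      (∑ k ∈ Finset.range
          (2 * ⌈(Real.log ((r : ℝ) * ((n : ℝ) - r) + 1) / ((r : ℝ) * ((n : ℝ) - r + 1)) +
                  1 / (((r : ℝ) + 1) * ((n : ℝ) - r + 1))) * (n.choose r : ℝ)⌉₊ + 1),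
          ((2 ^ n * (n + 1)).choose k : ℝ)) ≤
        2 ^ (c * (Real.logb 2 n) ^ 2 / (n : ℝ) ^ 2 * (n.choose (n / 2) : ℝ)) := by
  refine ⟨1000, by norm_num, ?_⟩
  rw [Filter.eventually_atTop]
  refine ⟨100, fun n hn r hr1 hr2 => ?_⟩
  have hb : (1:ℝ) < 2 := one_lt_two
  have hn100 : (100:ℝ) ≤ (n:ℝ) := by exact_mod_cast hn
  have hrn : r ≤ n := by omega
  have hrR : (1:ℝ) ≤ (r:ℝ) := by exact_mod_cast hr1
  have h2rR : 2*(r:ℝ) ≤ (n:ℝ) := by exact_mod_cast hr2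
  have hnr1 : (1:ℝ) ≤ (n:ℝ) - r := by linarith
  set M : ℕ := n.choose (n/2) with hMdef
  have hM1 : (1:ℝ) ≤ (M:ℝ) := by
    exact_mod_cast Nat.choose_pos (Nat.div_le_self n 2)
  have hMsq : (n:ℝ)^2 ≤ (M:ℝ) := by exact_mod_cast aux_M_ge_sq n (by omega)
  have hM2n : (M:ℝ) ≤ 2^n := by exact_mod_cast aux_mid_le_two_pow n
  -- log facts
  have hnpos : (0:ℝ) < n := by linarith
  have hln1 : (1:ℝ) ≤ Real.log n := by
    rw [Real.le_log_iff_exp_le hnpos]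
    have := Real.exp_one_lt_d9
    linarith
  have hln_le : Real.log n ≤ (n:ℝ) := by
    have := Real.log_le_sub_one_of_pos hnpos; linarith
  have hLg1 : (1:ℝ) ≤ Real.logb 2 n := by
    rw [show (1:ℝ) = Real.logb 2 2 from (Real.logb_self_eq_one hb).symm]
    exact Real.logb_le_logb_of_le hb (by norm_num) (by linarith)
  -- set x (matching the goal), then w
  set x : ℝ := (Real.log ((r : ℝ) * ((n : ℝ) - r) + 1) / ((r : ℝ) * ((n : ℝ) - r + 1)) +
                  1 / (((r : ℝ) + 1) * ((n : ℝ) - r + 1))) * (n.choose r : ℝ) with hxdef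
  set w : ℝ := (n:ℝ) - r + 1 with hwdef
  have hw2 : (2:ℝ) ≤ w := by rw [hwdef]; linarith
  have hwpos : (0:ℝ) < w := by linarith
  have hd1 : (0:ℝ) < (r:ℝ) * w := by positivity
  have hd2 : (0:ℝ) < ((r:ℝ)+1) * w := by positivity
  have hN1 : (1:ℝ) ≤ (n.choose r : ℝ) := by exact_mod_cast Nat.choose_pos hrn
  have hlog_arg : (1:ℝ) ≤ (r:ℝ) * ((n:ℝ) - r) + 1 := by nlinarith
  have hlognn : (0:ℝ) ≤ Real.log ((r : ℝ) * ((n : ℝ) - r) + 1) := Real.log_nonneg hlog_arg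
  have hxpos : 0 < x := by
    rw [hxdef]
    apply mul_pos _ (by linarith)
    apply add_pos_of_nonneg_of_pos
    · exact div_nonneg hlognn hd1.le
    · positivity
  -- sigma bound
  have hsig : Real.log ((r : ℝ) * ((n : ℝ) - r) + 1) / ((r : ℝ) * w) +
      1 / (((r : ℝ) + 1) * w) ≤ 3 * Real.log n / ((r:ℝ) * w) := by
    have e1 : Real.log ((r : ℝ) * ((n : ℝ) - r) + 1) ≤ 2 * Real.log n := by
      have h1 : (r:ℝ) * ((n:ℝ)-r) + 1 ≤ (n:ℝ)^2 := by nlinarith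
      calc Real.log ((r : ℝ) * ((n : ℝ) - r) + 1) ≤ Real.log ((n:ℝ)^2) :=
            Real.log_le_log (by linarith) h1
        _ = 2 * Real.log n := by rw [Real.log_pow]; norm_num
    have e2 : 1 / (((r:ℝ)+1) * w) ≤ Real.log n / ((r:ℝ) * w) := by
      rw [div_le_div_iff₀ hd2 hd1]
      have h1 : (r:ℝ) * w ≤ ((r:ℝ)+1) * w := by nlinarith
      have h2 : ((r:ℝ)+1) * w ≤ Real.log n * (((r:ℝ)+1) * w) :=
        le_mul_of_one_le_left hd2.le hln1
      linarith
    have e3 : Real.log ((r : ℝ) * ((n : ℝ) - r) + 1) / ((r : ℝ) * w) ≤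
        2 * Real.log n / ((r:ℝ) * w) := by gcongr
    calc Real.log ((r : ℝ) * ((n : ℝ) - r) + 1) / ((r : ℝ) * w) + 1 / (((r:ℝ)+1) * w)
        ≤ 2 * Real.log n / ((r:ℝ) * w) + Real.log n / ((r:ℝ) * w) := add_le_add e3 e2
      _ = 3 * Real.log n / ((r:ℝ) * w) := by ring
  -- the key choose ratio bound
  have hP4M : ((n+2).choose (r+1) : ℝ) ≤ 4 * (M:ℝ) := by
    exact_mod_cast aux_choose_le_4mid n r hr1
  have hid : ((n:ℝ)+1) * ((n:ℝ)+2) * (n.choose r : ℝ)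
      = ((r:ℝ)+1) * w * ((n+2).choose (r+1) : ℝ) := by
    have h := congrArg (Nat.cast : ℕ → ℝ) (aux_identity n r hrn)
    push_cast [Nat.cast_sub hrn] at h
    rw [hwdef]; linarith [h]
  have hkey : (n.choose r : ℝ) / ((r:ℝ) * w) ≤ 8 * (M:ℝ) / (n:ℝ)^2 := by
    have s1 : (n.choose r : ℝ) / ((r:ℝ) * w)
        ≤ 2 * ((n.choose r : ℝ) / (((r:ℝ)+1) * w)) := by
      rw [div_le_iff₀ hd1]
      have expand : 2 * ((n.choose r : ℝ) / (((r:ℝ)+1) * w)) * ((r:ℝ) * w)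
          = (n.choose r : ℝ) * (2*(r:ℝ)/((r:ℝ)+1)) := by
        field_simp
      rw [expand]
      have h1 : (1:ℝ) ≤ 2*(r:ℝ)/((r:ℝ)+1) := by
        rw [le_div_iff₀ (by linarith)]; linarith
      nlinarith [hN1]
    have s2 : (n.choose r : ℝ) / (((r:ℝ)+1) * w)
        = ((n+2).choose (r+1) : ℝ) / (((n:ℝ)+1) * ((n:ℝ)+2)) := by
      rw [div_eq_div_iff hd2.ne' (by positivity : (0:ℝ) < ((n:ℝ)+1)*((n:ℝ)+2)).ne']
      linarith [hid]
    have s3 : ((n+2).choose (r+1) : ℝ) / (((n:ℝ)+1) * ((n:ℝ)+2)) ≤ 4 * (M:ℝ) / (n:ℝ)^2 := by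
      apply div_le_div₀ (by positivity) hP4M (by positivity)
      nlinarith
    calc (n.choose r : ℝ) / ((r:ℝ) * w) ≤ 2 * ((n.choose r : ℝ) / (((r:ℝ)+1) * w)) := s1
      _ = 2 * (((n+2).choose (r+1) : ℝ) / (((n:ℝ)+1) * ((n:ℝ)+2))) := by rw [s2]
      _ ≤ 2 * (4 * (M:ℝ) / (n:ℝ)^2) := by linarith [s3]
      _ = 8 * (M:ℝ) / (n:ℝ)^2 := by ring
  -- bound on x
  have hx_le : x ≤ 24 * Real.log n * (M:ℝ) / (n:ℝ)^2 := by
    have h1 : x ≤ 3 * Real.log n / ((r:ℝ) * w) * (n.choose r : ℝ) := by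
      rw [hxdef]
      exact mul_le_mul_of_nonneg_right hsig (by linarith)
    have h2 : 3 * Real.log n / ((r:ℝ) * w) * (n.choose r : ℝ)
        = 3 * Real.log n * ((n.choose r : ℝ) / ((r:ℝ) * w)) := by ring
    have h3 : 3 * Real.log n * ((n.choose r : ℝ) / ((r:ℝ) * w))
        ≤ 3 * Real.log n * (8 * (M:ℝ) / (n:ℝ)^2) := by
      apply mul_le_mul_of_nonneg_left hkey (by linarith)
    calc x ≤ 3 * Real.log n / ((r:ℝ) * w) * (n.choose r : ℝ) := h1
      _ = 3 * Real.log n * ((n.choose r : ℝ) / ((r:ℝ) * w)) := h2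
      _ ≤ 3 * Real.log n * (8 * (M:ℝ) / (n:ℝ)^2) := h3
      _ = 24 * Real.log n * (M:ℝ) / (n:ℝ)^2 := by ring
  -- define K, Q, m, S
  set K : ℕ := 2 * ⌈x⌉₊ with hKdef
  have hceilpos : 1 ≤ ⌈x⌉₊ := Nat.ceil_pos.mpr hxpos
  have hKnat2 : 2 ≤ K := by omega
  have hK2 : (2:ℝ) ≤ (K:ℝ) := by exact_mod_cast hKnat2
  have hceil : (⌈x⌉₊:ℝ) < x + 1 := Nat.ceil_lt_add_one hxpos.le
  set Q : ℝ := 50 * Real.log n * (M:ℝ) / (n:ℝ)^2 with hQdef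
  have hQpos : 0 < Q := by
    rw [hQdef]
    have : (0:ℝ) < Real.log n := by linarith only [hln1]
    positivity
  have hKQ : (K:ℝ) ≤ Q := by
    have h1 : (K:ℝ) ≤ 2*x + 2 := by
      rw [hKdef]; push_cast; linarith only [hceil]
    have h3 : (2:ℝ) ≤ 2 * Real.log n * (M:ℝ) / (n:ℝ)^2 := by
      rw [le_div_iff₀ (by positivity)]
      have hh : (0:ℝ) ≤ (Real.log n - 1) * (M:ℝ) :=
        mul_nonneg (by linarith only [hln1]) (by linarith only [hM1])
      linarith only [hh, hMsq]
    rw [hQdef]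
    have e1 : 24 * Real.log ↑n * (M:ℝ) / (n:ℝ)^2 = 24 * (Real.log ↑n * (M:ℝ) / (n:ℝ)^2) := by ring
    have e2 : 2 * Real.log ↑n * (M:ℝ) / (n:ℝ)^2 = 2 * (Real.log ↑n * (M:ℝ) / (n:ℝ)^2) := by ring
    have e3 : 50 * Real.log ↑n * (M:ℝ) / (n:ℝ)^2 = 50 * (Real.log ↑n * (M:ℝ) / (n:ℝ)^2) := by ring
    rw [e1] at hx_le; rw [e2] at h3; rw [e3]
    linarith only [hx_le, h1, h3]
  have hQM : Q ≤ (M:ℝ) := by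
    rw [hQdef, div_le_iff₀ (by positivity)]
    have h1 : 50 * Real.log n ≤ (n:ℝ)^2 := by nlinarith only [hln_le, hn100, sq_nonneg ((n:ℝ) - 50)]
    have hh := mul_le_mul_of_nonneg_right h1 (by linarith only [hM1] : (0:ℝ) ≤ (M:ℝ))
    linarith only [hh]
  set m : ℕ := 2^n*(n+1) with hmdef
  have hm_cast : ((2:ℝ))^n * ((n:ℝ)+1) = (m:ℝ) := by rw [hmdef]; push_cast; ring
  have h2npos : (0:ℝ) < (2:ℝ)^n := by positivity
  have h2nm : ((2:ℝ))^n ≤ (m:ℝ) := by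
    have hh : (0:ℝ) ≤ (2:ℝ)^n * (n:ℝ) := mul_nonneg h2npos.le (by linarith only [hn100])
    linarith only [hh, hm_cast]
  have hKm : (K:ℝ) ≤ (m:ℝ) := hKQ.trans (hQM.trans (hM2n.trans h2nm))
  have hmKpos : (0:ℝ) < (m:ℝ) + (K:ℝ) := by
    have : (0:ℝ) ≤ (m:ℝ) := Nat.cast_nonneg m
    linarith only [this, hK2]
  set S : ℝ := ∑ k ∈ Finset.range (K+1), ((m).choose k : ℝ) with hSdef
  have hS1 : (1:ℝ) ≤ S := by
    have h := Finset.single_le_sum (f := fun k => ((m).choose k : ℝ))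
      (fun i _ => by positivity) (Finset.mem_range.mpr (by omega : 0 < K+1))
    simpa using h
  have hSpos : (0:ℝ) < S := by linarith only [hS1]
  have hT : S ≤ ((m+K).choose K : ℝ) := by
    rw [hSdef]; exact_mod_cast aux_sum_choose m K
  have hS3 : S ≤ (Real.exp 1 * ((m:ℝ) + (K:ℝ)) / (K:ℝ))^K := by
    have h := aux_choose_le (m+K) K (by omega)
    push_cast at h
    exact hT.trans h
  set A : ℝ := (n:ℝ) + 7 * Real.logb 2 n with hAdef
  have hLgnn : 0 ≤ Real.logb 2 n := by linarith only [hLg1]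
  have hA1 : Real.logb 2 (Real.exp 1 * ((m:ℝ)+(K:ℝ))) ≤ A := by
    have he : Real.exp 1 ≤ 3 := by have := Real.exp_one_lt_d9; linarith only [this]
    have hepos : (0:ℝ) < Real.exp 1 := Real.exp_pos 1
    have hub : Real.exp 1 * ((m:ℝ)+(K:ℝ)) ≤ (6 * ((n:ℝ)+1)) * ((2:ℝ)^n) := by
      have hmK : (m:ℝ) + (K:ℝ) ≤ 2*(m:ℝ) := by linarith only [hKm]
      calc Real.exp 1 * ((m:ℝ)+(K:ℝ)) ≤ 3 * (2*(m:ℝ)) :=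
            mul_le_mul he hmK hmKpos.le (by norm_num)
        _ = 6*(m:ℝ) := by ring
        _ = (6 * ((n:ℝ)+1)) * ((2:ℝ)^n) := by rw [← hm_cast]; ring
    have l1 : Real.logb 2 (Real.exp 1 * ((m:ℝ)+(K:ℝ)))
        ≤ Real.logb 2 ((6 * ((n:ℝ)+1)) * ((2:ℝ)^n)) :=
      Real.logb_le_logb_of_le hb (by positivity) hub
    have lr : Real.logb 2 ((6 * ((n:ℝ)+1)) * ((2:ℝ)^n))
        = Real.logb 2 (6*((n:ℝ)+1)) + (n:ℝ) * 1 := by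
      rw [Real.logb_mul (by positivity) (by positivity), Real.logb_pow,
        Real.logb_self_eq_one hb]
    rw [lr] at l1
    have h6 : (6:ℝ)*((n:ℝ)+1) ≤ (n:ℝ)^7 := by
      have hp : (n:ℝ)^2 ≤ (n:ℝ)^7 := pow_le_pow_right₀ (by linarith only [hn100]) (by norm_num)
      nlinarith only [hp, hn100, sq_nonneg ((n:ℝ) - 7)]
    have l2 : Real.logb 2 (6*((n:ℝ)+1)) ≤ Real.logb 2 ((n:ℝ)^7) :=
      Real.logb_le_logb_of_le hb (by positivity) h6
    rw [Real.logb_pow] at l2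
    rw [hAdef]
    push_cast at l2 ⊢
    linarith only [l1, l2]
  have hAQ : Real.logb 2 Q ≤ A := by
    have l1 : Real.logb 2 Q ≤ Real.logb 2 ((2:ℝ)^n) :=
      Real.logb_le_logb_of_le hb hQpos (hQM.trans hM2n)
    rw [Real.logb_pow, Real.logb_self_eq_one hb] at l1
    rw [hAdef]; linarith only [l1, hLgnn]
  have hLgS : Real.logb 2 S ≤ (K:ℝ) * (A - Real.logb 2 K) := by
    have l1 : Real.logb 2 S ≤ Real.logb 2 ((Real.exp 1 * ((m:ℝ)+(K:ℝ)) / (K:ℝ))^K) :=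
      Real.logb_le_logb_of_le hb hSpos hS3
    rw [Real.logb_pow, Real.logb_div (by positivity) (by positivity)] at l1
    refine l1.trans ?_
    apply mul_le_mul_of_nonneg_left _ (by positivity : (0:ℝ) ≤ (K:ℝ))
    linarith only [hA1]
  have hpq := aux_pq (K:ℝ) Q A (by linarith only [hK2]) hKQ hAQ
  have hQA : A - Real.logb 2 Q ≤ 11 * Real.logb 2 n := by
    have d1 : Real.logb 2 Q = Real.logb 2 (50 * Real.log n) + Real.logb 2 (M:ℝ)
        - Real.logb 2 ((n:ℝ)^2) := by
      rw [hQdef, Real.logb_div (by positivity : (0:ℝ) < 50 * Real.log ↑n * ↑M).ne'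
        (by positivity : (0:ℝ) < (n:ℝ)^2).ne',
        Real.logb_mul (by positivity : (0:ℝ) < (50:ℝ) * Real.log ↑n).ne'
        (by positivity : (0:ℝ) < (M:ℝ)).ne']
    have d2 : 0 ≤ Real.logb 2 (50 * Real.log n) :=
      Real.logb_nonneg hb (by linarith only [hln1])
    have d3 : Real.logb 2 ((n:ℝ)^2) = 2 * Real.logb 2 n := by
      rw [Real.logb_pow]; norm_num
    have d4 : (n:ℝ) ≤ Real.logb 2 ((n:ℝ)+1) + Real.logb 2 (M:ℝ) := by
      have hc : ((2:ℝ))^n ≤ ((n:ℝ)+1) * (M:ℝ) := by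
        exact_mod_cast aux_two_pow_le n
      have l := Real.logb_le_logb_of_le hb h2npos hc
      rw [Real.logb_pow, Real.logb_self_eq_one hb,
        Real.logb_mul (by positivity : (0:ℝ) < (n:ℝ)+1).ne'
        (by positivity : (0:ℝ) < (M:ℝ)).ne'] at l
      linarith only [l]
    have d5 : Real.logb 2 ((n:ℝ)+1) ≤ 2 * Real.logb 2 n := by
      have hc : (n:ℝ)+1 ≤ (n:ℝ)^2 := by nlinarith only [hn100, sq_nonneg ((n:ℝ) - 1)]
      have l := Real.logb_le_logb_of_le hb (by linarith only [hn100]) hc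
      rw [d3] at l
      exact l
    rw [hAdef]
    linarith only [d1, d2, d3, d4, d5]
  have hfin : Real.logb 2 S ≤ 1000 * (Real.logb 2 n)^2 / (n:ℝ)^2 * (M:ℝ) := by
    have h1 : Q * (A - Real.logb 2 Q) + 2*Q ≤ Q * (11 * Real.logb 2 n) + 2*Q := by
      have hh := mul_le_mul_of_nonneg_left hQA hQpos.le
      linarith only [hh]
    have h2 : Q * (11 * Real.logb 2 n) + 2*Q ≤ 13 * Q * Real.logb 2 n := by
      have hh := mul_le_mul_of_nonneg_left hLg1 hQpos.le
      linarith only [hh]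
    have h3 : 13 * Q * Real.logb 2 n ≤ 1000 * (Real.logb 2 n)^2 / (n:ℝ)^2 * (M:ℝ) := by
      have hlog_eq : Real.log n = Real.logb 2 n * Real.log 2 := by
        rw [Real.logb]
        field_simp
      have hl2 : Real.log 2 ≤ 0.7 := by have := Real.log_two_lt_d9; linarith only [this]
      rw [hQdef, hlog_eq]
      have expand : 13 * (50 * (Real.logb 2 ↑n * Real.log 2) * (M:ℝ) / (n:ℝ)^2) * Real.logb 2 ↑n
          = (650 * Real.log 2) * ((Real.logb 2 ↑n)^2 * (M:ℝ) / (n:ℝ)^2) := by ring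
      rw [expand]
      have hle : (650:ℝ) * Real.log 2 ≤ 1000 := by linarith only [hl2]
      have hnn : (0:ℝ) ≤ (Real.logb 2 ↑n)^2 * (M:ℝ)/(n:ℝ)^2 := by positivity
      calc (650 * Real.log 2) * ((Real.logb 2 ↑n)^2 * (M:ℝ) / (n:ℝ)^2)
          ≤ 1000 * ((Real.logb 2 ↑n)^2 * (M:ℝ) / (n:ℝ)^2) :=
            mul_le_mul_of_nonneg_right hle hnn
        _ = 1000 * (Real.logb 2 ↑n)^2 / (n:ℝ)^2 * (M:ℝ) := by ring
    linarith only [hLgS, hpq, h1, h2, h3]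
  calc S = (2:ℝ) ^ (Real.logb 2 S) := (Real.rpow_logb two_pos (by norm_num) hSpos).symm
    _ ≤ (2:ℝ) ^ (1000 * (Real.logb 2 n)^2 / (n:ℝ)^2 * (M:ℝ)) :=
        Real.rpow_le_rpow_of_exponent_le one_le_two hfin
end

section
/- There exists a constant c > 0 such that for all sufficiently large n and every integer r with 1 ≤ r ≤ c·log n, one has log Σ_{k=0}^{2⌈σ̃_{n,r} N⌉} C(2^n(n+1), k) ≥ C(n,r), where N = C(n,r) and σ̃_{n,r} = ln(r(n−r)+1)/(r(n−r+1)) + 1/((r+1)(n−r+1)). -/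
open Filter
open scoped symmDiff

variable {α : Type*}

private lemma aux1' (s : ℝ) (hs : 1000 ≤ s) :
    16 * s ≤ 0.6931471803 * (3 * (s * s) / 4 - 1) := by nlinarith

private lemma aux2' (a b y : ℝ) (h : a ≤ 0.6931471803 * y) (hl : 0.6931471803 < b)
    (hy : 0 ≤ y) : a ≤ b * y := by nlinarith

set_option maxHeartbeats 4000000 in
/-- for small `r` (at most `c log n`), the flat-cover count term alone
is at least `C(n,r)` in the logarithm. -/
theorem log_sum_choose_ge_choose :
    ∃ c : ℝ, 0 < c ∧ ∀ᶠ n : ℕ in Filter.atTop, ∀ r : ℕ, 1 ≤ r → (r : ℝ) ≤ c * Real.logb 2 n →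
      (n.choose r : ℝ) ≤
        Real.logb 2
          (∑ k ∈ Finset.range
              (2 * ⌈(Real.log ((r : ℝ) * ((n : ℝ) - r) + 1) / ((r : ℝ) * ((n : ℝ) - r + 1)) +
                      1 / (((r : ℝ) + 1) * ((n : ℝ) - r + 1))) * (n.choose r : ℝ)⌉₊ + 1),
            ((2 ^ n * (n + 1)).choose k : ℝ)) := by
  refine ⟨1/10, by norm_num, ?_⟩
  rw [Filter.eventually_atTop]
  refine ⟨1000000, fun n hn r hr1 hrle => ?_⟩
  have hx6 : (1000000 : ℝ) ≤ (n : ℝ) := by exact_mod_cast hn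
  have hx0 : (0 : ℝ) < n := by linarith
  set x : ℝ := (n : ℝ) with hxdef
  set L : ℝ := Real.log x with hLdef
  clear_value x L
  have hlog2l : (0.6931471803 : ℝ) < Real.log 2 := Real.log_two_gt_d9
  have hlog2u : Real.log 2 < 0.6931471808 := Real.log_two_lt_d9
  -- L ≥ 13
  have hL13 : (13 : ℝ) ≤ L := by
    rw [hLdef, Real.le_log_iff_exp_le hx0]
    have h1 : Real.exp 13 = Real.exp 1 ^ (13 : ℕ) := by
      rw [← Real.exp_nat_mul]; norm_num
    have h2 : Real.exp 1 ^ (13 : ℕ) ≤ (2.7182818286 : ℝ) ^ (13 : ℕ) :=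
      pow_le_pow_left₀ (Real.exp_pos 1).le Real.exp_one_lt_d9.le 13
    have h3 : (2.7182818286 : ℝ) ^ (13 : ℕ) ≤ 1000000 := by norm_num
    linarith
  -- r ≤ L/6
  have haL : (r : ℝ) ≤ L / 6 := by
    have h1 : (r : ℝ) ≤ 1/10 * (L / Real.log 2) := by
      rw [Real.logb] at hrle; rw [hLdef]; exact hrle
    have h2 : L / Real.log 2 ≤ L / 0.6931471803 := by
      apply div_le_div_of_nonneg_left (by linarith) (by norm_num) hlog2l.le
    have h3 : L / 0.6931471803 = L * (10000000000/6931471803) := by norm_num; ring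
    rw [h3] at h2
    linarith
  have hLx : L ≤ x - 1 := by
    rw [hLdef]; exact Real.log_le_sub_one_of_pos hx0
  have hax2 : (r : ℝ) ≤ x / 2 := by linarith
  have ha1 : (1 : ℝ) ≤ (r : ℝ) := by exact_mod_cast hr1
  have hrn : r ≤ n := by
    have h : (r : ℝ) ≤ x := by linarith
    rw [hxdef] at h
    exact_mod_cast h
  set N : ℕ := n.choose r with hNdef
  set s : ℝ := Real.log ((r : ℝ) * (x - r) + 1) / ((r : ℝ) * (x - r + 1)) +
      1 / (((r : ℝ) + 1) * (x - r + 1)) with hsdef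
  set m : ℕ := 2 * ⌈s * (N : ℝ)⌉₊ with hmdef
  set M : ℕ := 2 ^ n * (n + 1) with hMdef
  clear_value N s m M
  -- basic positivity
  have har0 : (0 : ℝ) < (r : ℝ) := by linarith
  have hxr2 : x / 2 ≤ x - r := by linarith
  have hden1 : (0 : ℝ) < (r : ℝ) * (x - r + 1) := by nlinarith
  have hden2 : (0 : ℝ) < ((r : ℝ) + 1) * (x - r + 1) := by nlinarith
  have harg1 : (1 : ℝ) ≤ (r : ℝ) * (x - r) + 1 := by nlinarith
  -- lower bound on s : 2/x ≤ s
  have hnum_low : L - 1 ≤ Real.log ((r : ℝ) * (x - r) + 1) := by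
    have h1 : x / 2 ≤ (r : ℝ) * (x - r) + 1 := by nlinarith
    have h2 : Real.log (x / 2) ≤ Real.log ((r : ℝ) * (x - r) + 1) :=
      Real.log_le_log (by linarith) h1
    have h3 : Real.log (x / 2) = L - Real.log 2 := by
      rw [hLdef, Real.log_div (by linarith) (by norm_num)]
    linarith
  have hs_low : 2 / x ≤ s := by
    have h1 : (r : ℝ) * (x - r + 1) ≤ (r : ℝ) * x := by nlinarith
    have h2 : (L - 1) / ((r : ℝ) * x) ≤
        Real.log ((r : ℝ) * (x - r) + 1) / ((r : ℝ) * (x - r + 1)) :=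
      div_le_div₀ (by linarith [hnum_low]) hnum_low hden1 h1
    have h3 : 2 / x ≤ (L - 1) / ((r : ℝ) * x) := by
      rw [div_le_div_iff₀ hx0 (mul_pos har0 hx0)]
      nlinarith
    have h4 : (0 : ℝ) < 1 / (((r : ℝ) + 1) * (x - r + 1)) := by positivity
    rw [hsdef]; linarith
  have hsx : (2 : ℝ) ≤ s * x := by
    have := (div_le_iff₀ hx0).mp hs_low
    linarith
  have hs0 : (0 : ℝ) < s := by
    have h : (0:ℝ) < 2 / x := by positivity
    linarith
  -- upper bound on s : s ≤ 4L
  have hs_up : s ≤ 4 * L := by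
    have hnum_up : Real.log ((r : ℝ) * (x - r) + 1) ≤ 3 * L := by
      have h1 : (r : ℝ) * (x - r) + 1 ≤ 2 * x ^ 2 := by nlinarith
      have h2 : Real.log ((r : ℝ) * (x - r) + 1) ≤ Real.log (2 * x ^ 2) :=
        Real.log_le_log (by linarith) h1
      have h3 : Real.log (2 * x ^ 2) = Real.log 2 + 2 * L := by
        rw [Real.log_mul (by norm_num) (by positivity), Real.log_pow, hLdef]
        push_cast; ring
      linarith
    have hnum0 : 0 ≤ Real.log ((r : ℝ) * (x - r) + 1) := Real.log_nonneg harg1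
    have hden1' : (1 : ℝ) ≤ (r : ℝ) * (x - r + 1) := by nlinarith
    have h4 : Real.log ((r : ℝ) * (x - r) + 1) / ((r : ℝ) * (x - r + 1)) ≤
        Real.log ((r : ℝ) * (x - r) + 1) := div_le_self hnum0 hden1'
    have hden2' : (2 : ℝ) ≤ ((r : ℝ) + 1) * (x - r + 1) := by nlinarith
    have h5 : 1 / (((r : ℝ) + 1) * (x - r + 1)) ≤ 1 := by
      rw [div_le_one hden2]; linarith
    rw [hsdef]; linarith
  -- N bounds
  have hN1 : 1 ≤ N := by rw [hNdef]; exact Nat.choose_pos hrn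
  have hN1R : (1 : ℝ) ≤ (N : ℝ) := by exact_mod_cast hN1
  have hNx : (N : ℝ) ≤ Real.exp (L ^ 2 / 6) := by
    have h1 : (N : ℝ) ≤ x ^ (r : ℕ) := by
      rw [hNdef, hxdef]; exact_mod_cast Nat.choose_le_pow n r
    have h2 : x ^ (r : ℕ) = Real.exp ((r : ℕ) * L) := by
      rw [Real.exp_nat_mul, hLdef, Real.exp_log hx0]
    have h3 : ((r : ℕ) : ℝ) * L ≤ L ^ 2 / 6 := by nlinarith
    calc (N : ℝ) ≤ x ^ (r : ℕ) := h1
      _ = Real.exp ((r : ℕ) * L) := h2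
      _ ≤ Real.exp (L ^ 2 / 6) := Real.exp_le_exp.mpr h3
  -- m bounds
  have hm_low : 2 * (s * (N : ℝ)) ≤ (m : ℝ) := by
    have h := Nat.le_ceil (s * (N : ℝ))
    rw [hmdef]; push_cast; linarith
  have hm2 : 2 ≤ m := by
    have h : 0 < ⌈s * (N : ℝ)⌉₊ := Nat.ceil_pos.mpr (by positivity)
    omega
  have hm0R : (0 : ℝ) < (m : ℝ) := by
    have h : (2:ℝ) ≤ (m:ℝ) := by exact_mod_cast hm2
    linarith
  have hm_up : (m : ℝ) ≤ Real.exp (L ^ 2) := by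
    have h1 : (m : ℝ) ≤ 2 * (s * (N : ℝ)) + 2 := by
      have h := Nat.ceil_lt_add_one (show (0:ℝ) ≤ s * (N : ℝ) by positivity)
      rw [hmdef]; push_cast; linarith
    have hE1 : (1 : ℝ) ≤ Real.exp (L ^ 2 / 6) := Real.one_le_exp (by positivity)
    have h2 : 2 * (s * (N : ℝ)) + 2 ≤ (8 * L + 2) * Real.exp (L ^ 2 / 6) := by
      have hsN : s * (N : ℝ) ≤ 4 * L * Real.exp (L ^ 2 / 6) := by
        have := mul_le_mul hs_up hNx (by positivity) (by positivity)
        linarith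
      nlinarith
    have h3 : 8 * L + 2 ≤ Real.exp (5 * L ^ 2 / 6) := by
      have h4 : 5 * L ^ 2 / 6 + 1 ≤ Real.exp (5 * L ^ 2 / 6) := Real.add_one_le_exp _
      nlinarith
    have h5 : Real.exp (L ^ 2) = Real.exp (5 * L ^ 2 / 6) * Real.exp (L ^ 2 / 6) := by
      rw [← Real.exp_add]; ring_nf
    nlinarith [Real.exp_pos (L ^ 2 / 6), Real.exp_pos (5 * L ^ 2 / 6)]
  -- L² ≤ 16 √x and key size bound
  have hsqx : Real.sqrt x * Real.sqrt x = x := Real.mul_self_sqrt hx0.le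
  have hsq1000 : (1000 : ℝ) ≤ Real.sqrt x := by
    nlinarith [Real.sqrt_nonneg x]
  have hLsq : L ^ 2 ≤ 16 * Real.sqrt x := by
    set t : ℝ := Real.sqrt (Real.sqrt x) with htdef
    have hsx0 : (0:ℝ) ≤ Real.sqrt x := Real.sqrt_nonneg x
    have ht0 : (0:ℝ) ≤ t := by rw [htdef]; exact Real.sqrt_nonneg _
    have ht2 : t ^ 2 = Real.sqrt x := by rw [htdef]; exact Real.sq_sqrt hsx0
    have ht0' : (0:ℝ) < t := by
      rw [htdef]; exact Real.sqrt_pos.mpr (Real.sqrt_pos.mpr hx0)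
    clear_value t
    have hlt : L = 4 * Real.log t := by
      rw [hLdef, htdef, Real.log_sqrt hsx0, Real.log_sqrt hx0.le]; ring
    have hlt2 : Real.log t ≤ t := by
      linarith [Real.log_le_sub_one_of_pos ht0']
    have hlog_t0 : 0 ≤ Real.log t := by
      rw [hlt] at hL13; linarith
    have hL4t : L ≤ 4 * t := by rw [hlt]; linarith
    have h9 := mul_self_le_mul_self (by linarith : (0:ℝ) ≤ L) hL4t
    have h : L ^ 2 ≤ 16 * t ^ 2 := by rw [pow_two, pow_two]; linarith
    rw [ht2] at h; exact h
  -- exp(L²) * 2^(x/4+1) ≤ 2^x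
  have hKey : Real.exp (L ^ 2) * (2 : ℝ) ^ (x / 4 + 1) ≤ (2 : ℝ) ^ (x : ℝ) := by
    have h1 : (2 : ℝ) ^ (x : ℝ) = (2 : ℝ) ^ (x / 4 + 1) * (2 : ℝ) ^ (3 * x / 4 - 1) := by
      rw [← Real.rpow_add two_pos]; congr 1; ring
    have h2 : Real.exp (L ^ 2) ≤ (2 : ℝ) ^ (3 * x / 4 - 1) := by
      rw [Real.rpow_def_of_pos two_pos]
      apply Real.exp_le_exp.mpr
      have h6 : (16 : ℝ) * Real.sqrt x ≤ 0.6931471803 * (3 * x / 4 - 1) := by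
        have h7 := aux1' (Real.sqrt x) hsq1000
        rw [hsqx] at h7; exact h7
      exact le_trans hLsq (aux2' _ _ _ (by linarith) hlog2l (by linarith))
    have h3 : (0:ℝ) < (2 : ℝ) ^ (x / 4 + 1) := Real.rpow_pos_of_pos two_pos _
    rw [h1]
    have h8 := mul_le_mul_of_nonneg_right h2 h3.le
    linarith [h8]
  -- M bounds
  have hM_ge : (2 : ℝ) ^ (x : ℝ) ≤ (M : ℝ) := by
    have h1 : ((2 ^ n : ℕ) : ℝ) = (2 : ℝ) ^ (x : ℝ) := by
      rw [hxdef, Real.rpow_natCast 2 n]; push_cast; ring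
    have h2 : (2 ^ n : ℕ) ≤ M := by
      rw [hMdef]; exact Nat.le_mul_of_pos_right _ (Nat.succ_pos n)
    calc (2 : ℝ) ^ (x : ℝ) = ((2 ^ n : ℕ) : ℝ) := h1.symm
      _ ≤ (M : ℝ) := by exact_mod_cast h2
  have hpow14 : (1 : ℝ) ≤ (2 : ℝ) ^ (x / 4) := Real.one_le_rpow one_le_two (by positivity)
  have hBig : (m : ℝ) * ((2 : ℝ) ^ (x / 4) + 1) ≤ (M : ℝ) + 1 := by
    have h1 : (2 : ℝ) ^ (x / 4) + 1 ≤ (2 : ℝ) ^ (x / 4 + 1) := by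
      rw [Real.rpow_add two_pos, Real.rpow_one]
      linarith
    have h2 : (m : ℝ) * ((2 : ℝ) ^ (x / 4) + 1) ≤ Real.exp (L ^ 2) * (2 : ℝ) ^ (x / 4 + 1) :=
      mul_le_mul hm_up h1 (by positivity) (Real.exp_pos _).le
    linarith
  have hmM : m ≤ M := by
    have h0 := mul_le_mul_of_nonneg_left hpow14 hm0R.le
    have h1 : 2 * (m : ℝ) ≤ (M : ℝ) + 1 := by linarith
    have hm2R : (2:ℝ) ≤ (m:ℝ) := by exact_mod_cast hm2
    have h2 : (m : ℝ) ≤ (M : ℝ) := by linarith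
    exact_mod_cast h2
  set D : ℕ := M + 1 - m with hDdef
  clear_value D
  have hDcast : (D : ℝ) = (M : ℝ) + 1 - (m : ℝ) := by
    rw [hDdef]; push_cast [Nat.cast_sub (by omega : m ≤ M + 1)]; ring
  have hDm : (m : ℝ) * (2 : ℝ) ^ (x / 4) ≤ (D : ℝ) := by
    rw [hDcast]; linarith [hBig]
  have hD0 : (0 : ℝ) < (D : ℝ) := by
    have hp : (0:ℝ) < (2 : ℝ) ^ (x / 4) := by positivity
    nlinarith [hDm, mul_pos hm0R hp]
  -- the logb step
  have hlogb : x / 4 ≤ Real.logb 2 ((D : ℝ) / (m : ℝ)) := by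
    rw [Real.le_logb_iff_rpow_le one_lt_two (by positivity)]
    rw [le_div_iff₀ hm0R]
    linarith [hDm]
  -- positivity of intermediate quantities
  have hpos1 : (0 : ℝ) < ((D : ℝ) / (m : ℝ)) ^ (m : ℕ) := by positivity
  have hchoose_pos : (0 : ℝ) < ((M.choose m : ℕ) : ℝ) := by
    exact_mod_cast Nat.choose_pos hmM
  -- main chain
  have hmain : (N : ℝ) ≤ (m : ℝ) * (x / 4) := by
    nlinarith [mul_le_mul_of_nonneg_right hm_low hx0.le,
      mul_le_mul_of_nonneg_right hsx (by positivity : (0:ℝ) ≤ 2 * (N : ℝ))]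
  calc (N : ℝ) ≤ (m : ℝ) * (x / 4) := hmain
    _ ≤ (m : ℝ) * Real.logb 2 ((D : ℝ) / (m : ℝ)) :=
        mul_le_mul_of_nonneg_left hlogb hm0R.le
    _ = Real.logb 2 (((D : ℝ) / (m : ℝ)) ^ (m : ℕ)) := (Real.logb_pow 2 _ m).symm
    _ ≤ Real.logb 2 ((D : ℝ) ^ (m : ℕ) / (m.factorial : ℝ)) := by
        apply Real.logb_le_logb_of_le one_lt_two hpos1
        rw [div_pow]
        apply div_le_div_of_nonneg_left (by positivity)
          (by exact_mod_cast m.factorial_pos) (by exact_mod_cast Nat.factorial_le_pow m)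
    _ ≤ Real.logb 2 ((M.choose m : ℝ)) := by
        apply Real.logb_le_logb_of_le one_lt_two
        · exact div_pos (by positivity) (by exact_mod_cast m.factorial_pos)
        · have hpc := Nat.pow_le_choose (α := ℝ) m M
          have hDe : M + 1 - m = D := hDdef.symm
          rw [hDe] at hpc
          exact hpc
    _ ≤ Real.logb 2 (∑ k ∈ Finset.range (m + 1), ((M.choose k : ℕ) : ℝ)) := by
        apply Real.logb_le_logb_of_le one_lt_two hchoose_pos
        exact Finset.single_le_sum (f := fun k => ((M.choose k : ℕ) : ℝ))
          (fun i _ => by positivity) (Finset.self_mem_range_succ m)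
end

section
/- Fix an integer r ≥ 1. Then limsup_{n→∞} [ log i(J(n,r)) / ( (C(n,r)/(n−r+1)) · log n ) ] ≤ 1; that is, log i(J(n,r)) ≤ (1+o(1)) · α_{n,r} C(n,r) log n as n → ∞ with r fixed, where α_{n,r} = 1/(n−r+1). -/
open Filter
open scoped symmDiff

variable {α : Type*}

section Aux

open Finset

/-- Monotonicity of binomial coefficients below the middle. -/
lemma aux_choose_mono_of_le_half {N k m : ℕ} (hkm : k ≤ m) (hm : m ≤ N / 2) :
    N.choose k ≤ N.choose m := by
  induction m with
  | zero => simp_all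
  | succ m ih =>
    rcases Nat.lt_or_ge k (m + 1) with h | h
    · exact (ih (by omega) (by omega)).trans
        (Nat.choose_le_succ_of_lt_half_left (by omega))
    · have : k = m + 1 := by omega
      simp [this]

lemma aux_choose_pred_self {r : ℕ} (hr : 1 ≤ r) : r.choose (r - 1) = r := by
  cases r with
  | zero => exact absurd hr (by norm_num)
  | succ k => simpa using Nat.choose_succ_self_right k

/-- Packing bound: a stable set in the Johnson graph `J(n,r)` has at most
`C(n, r-1) / r` elements. -/
lemma aux_johnson_stable_card {n r : ℕ} (hr : 1 ≤ r)
    (s : Finset {X : Finset (Fin n) // X.card = r})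
    (hs : (johnsonGraph (Fin n) r).IsStableSet (↑s : Set _)) :
    s.card * r ≤ n.choose (r - 1) := by
  classical
  have hdisj : ∀ X ∈ s, ∀ Y ∈ s, X ≠ Y →
      Disjoint (X.1.powersetCard (r - 1)) (Y.1.powersetCard (r - 1)) := by
    intro X hX Y hY hXY
    rw [Finset.disjoint_left]
    intro A hAX hAY
    rw [Finset.mem_powersetCard] at hAX hAY
    obtain ⟨hAX, hA⟩ := hAX
    obtain ⟨hAY, -⟩ := hAY
    have hXc : X.1.card = r := X.2
    have hYc : Y.1.card = r := Y.2
    have hsub : A ⊆ X.1 ∩ Y.1 := Finset.subset_inter hAX hAY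
    have hints : (X.1 ∩ Y.1).card ≤ X.1.card :=
      Finset.card_le_card Finset.inter_subset_left
    have hint_le : (X.1 ∩ Y.1).card ≤ r - 1 := by
      by_contra h
      push_neg at h
      have h2 : X.1 ∩ Y.1 = X.1 :=
        Finset.eq_of_subset_of_card_le Finset.inter_subset_left (by omega)
      have h3 : X.1 ⊆ Y.1 := by rw [← h2]; exact Finset.inter_subset_right
      have h4 : X.1 = Y.1 := Finset.eq_of_subset_of_card_le h3 (by omega)
      exact hXY (Subtype.ext h4)
    have hint : (X.1 ∩ Y.1).card = r - 1 :=
      le_antisymm hint_le (by have := Finset.card_le_card hsub; omega)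
    have hadj : (johnsonGraph (Fin n) r).Adj X Y := by
      show (X.1 ∆ Y.1).card = 2
      have hd : Disjoint (X.1 \ Y.1) (Y.1 \ X.1) := disjoint_sdiff_sdiff
      have h1 : (X.1 \ Y.1).card + (X.1 ∩ Y.1).card = X.1.card :=
        Finset.card_sdiff_add_card_inter _ _
      have h2 : (Y.1 \ X.1).card + (Y.1 ∩ X.1).card = Y.1.card :=
        Finset.card_sdiff_add_card_inter _ _
      have hic : (Y.1 ∩ X.1).card = (X.1 ∩ Y.1).card := by rw [Finset.inter_comm]
      have hsd : X.1 ∆ Y.1 = (X.1 \ Y.1) ∪ (Y.1 \ X.1) := by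
        rw [symmDiff_def]; rfl
      rw [hsd, Finset.card_union_of_disjoint hd]
      omega
    exact hs (Finset.mem_coe.2 hX) (Finset.mem_coe.2 hY) hadj
  have hcard := Finset.card_biUnion hdisj
  have hsubset : s.biUnion (fun X => X.1.powersetCard (r - 1)) ⊆
      (Finset.univ : Finset (Fin n)).powersetCard (r - 1) := by
    intro A hA
    rw [Finset.mem_biUnion] at hA
    obtain ⟨X, -, hAX⟩ := hA
    rw [Finset.mem_powersetCard] at hAX ⊢
    exact ⟨Finset.subset_univ _, hAX.2⟩
  have hle := Finset.card_le_card hsubset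
  rw [hcard] at hle
  have hsum : ∀ X ∈ s, (X.1.powersetCard (r - 1)).card = r := by
    intro X hX
    rw [Finset.card_powersetCard, X.2, aux_choose_pred_self hr]
  rw [Finset.sum_congr rfl hsum, Finset.sum_const, smul_eq_mul] at hle
  rwa [Finset.card_powersetCard, Finset.card_univ, Fintype.card_fin] at hle

/-- Counting stable sets by their cardinality. -/
lemma aux_numStableSets_le_sum {n r m : ℕ}
    (hcard : ∀ s : Finset {X : Finset (Fin n) // X.card = r},
      (johnsonGraph (Fin n) r).IsStableSet (↑s : Set _) → s.card ≤ m) :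
    numStableSets (johnsonGraph (Fin n) r) ≤
      ∑ k ∈ Finset.range (m + 1), (n.choose r).choose k := by
  classical
  set V := {X : Finset (Fin n) // X.card = r}
  have h1 : numStableSets (johnsonGraph (Fin n) r) ≤
      Nat.card {t : Finset V // t.card ≤ m} := by
    rw [numStableSets]
    apply Nat.card_le_card_of_injective
      (f := fun s : {s : Set V // (johnsonGraph (Fin n) r).IsStableSet s} =>
        (⟨s.1.toFinite.toFinset, by
          apply hcard
          rw [Set.Finite.coe_toFinset]
          exact s.2⟩ : {t : Finset V // t.card ≤ m}))
    intro s t hst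
    have : s.1.toFinite.toFinset = t.1.toFinite.toFinset := congrArg Subtype.val hst
    apply Subtype.ext
    rw [← Set.Finite.coe_toFinset s.1.toFinite, this, Set.Finite.coe_toFinset]
  have h2 : Nat.card {t : Finset V // t.card ≤ m} =
      ((Finset.univ : Finset (Finset V)).filter (fun t => t.card ≤ m)).card := by
    rw [Nat.card_eq_fintype_card, Fintype.card_subtype]
  have h3 : ((Finset.univ : Finset (Finset V)).filter (fun t => t.card ≤ m)) ⊆
      (Finset.range (m + 1)).biUnion
        (fun k => (Finset.univ : Finset V).powersetCard k) := by
    intro t ht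
    rw [Finset.mem_filter] at ht
    rw [Finset.mem_biUnion]
    exact ⟨t.card, Finset.mem_range.2 (by omega),
      Finset.mem_powersetCard.2 ⟨Finset.subset_univ _, rfl⟩⟩
  have h4 := (Finset.card_le_card h3).trans (Finset.card_biUnion_le)
  have h5 : ∀ k, ((Finset.univ : Finset V).powersetCard k).card =
      (n.choose r).choose k := by
    intro k
    rw [Finset.card_powersetCard, Finset.card_univ]
    congr 1
    rw [Fintype.card_finset_len, Fintype.card_fin]
  calc numStableSets (johnsonGraph (Fin n) r) ≤ _ := h1
    _ = _ := h2
    _ ≤ ∑ k ∈ Finset.range (m + 1), ((Finset.univ : Finset V).powersetCard k).card := h4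
    _ = ∑ k ∈ Finset.range (m + 1), (n.choose r).choose k := by
        exact Finset.sum_congr rfl (fun k _ => h5 k)

lemma aux_pow_div_factorial_le_exp (m : ℕ) :
    (m : ℝ) ^ m / m.factorial ≤ Real.exp m := by
  have h := Real.sum_le_exp_of_nonneg (x := (m : ℝ)) (by positivity) (m + 1)
  refine le_trans ?_ h
  exact Finset.single_le_sum (f := fun i => (m : ℝ) ^ i / i.factorial)
    (fun i _ => by positivity) (Finset.self_mem_range_succ m)

/-- The key per-`n` bound. -/
lemma aux_key_bound (r : ℕ) (hr : 1 ≤ r) (n : ℕ) (hn : 4 * r + 4 ≤ n) :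
    Real.logb 2 (numStableSets (johnsonGraph (Fin n) r)) ≤
      ((n.choose r : ℝ) / ((n : ℝ) - r + 1)) * (4 + Real.logb 2 n) := by
  classical
  set C := n.choose (r - 1) with hC
  set N := n.choose r with hN
  set m := C / r with hm
  have hrn : r ≤ n := by omega
  -- r ≤ C
  have hrC : r ≤ C := by
    rcases Nat.lt_or_ge r 2 with h1 | h2
    · have : r = 1 := by omega
      simp [hC, this]
    · have h3 : n.choose 1 ≤ n.choose (r - 1) :=
        aux_choose_mono_of_le_half (by omega) (by omega)
      rw [Nat.choose_one_right] at h3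
      omega
  have hm1 : 1 ≤ m := Nat.one_le_div_iff (by omega) |>.2 hrC
  -- division facts
  have hdm := Nat.div_add_mod C r
  rw [← hm] at hdm
  have hmod : C % r < r := Nat.mod_lt _ (by omega)
  have hdiv1 : r * m ≤ C := Nat.le.intro hdm
  have hdiv2 : C < r * m + r := by rw [← hdm]; exact Nat.add_lt_add_left hmod _
  -- the identity r * N = (n - r + 1) * C
  set a := n - r + 1 with haa
  have ha2 : 2 ≤ a := by omega
  have han : a + r = n + 1 := by omega
  have hid : N * r = C * a := by
    have h := Nat.choose_succ_right_eq n (r - 1)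
    have e1 : r - 1 + 1 = r := by omega
    have e2 : n - (r - 1) = a := by omega
    rw [e1, e2] at h
    exact h
  -- N ≤ 2 * n * m
  have hCm : C ≤ 2 * (r * m) := by
    have : r ≤ r * m := Nat.le_mul_of_pos_right r (by omega)
    omega
  have hNm : N ≤ 2 * n * m := by
    have h2 : N * r ≤ (2 * (r * m)) * a := hid ▸ Nat.mul_le_mul_right a hCm
    have h3 : (2 * (r * m)) * a = r * (2 * a * m) := by ring
    rw [h3, mul_comm N r] at h2
    have h4 : N ≤ 2 * a * m := Nat.le_of_mul_le_mul_left h2 (by omega)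
    refine h4.trans (Nat.mul_le_mul_right m ?_)
    have : a ≤ n := by omega
    omega
  -- a * m ≤ N
  have hma : a * m ≤ N := by
    have h2 : r * (a * m) ≤ N * r := by
      rw [hid]
      calc r * (a * m) = (r * m) * a := by ring
        _ ≤ C * a := Nat.mul_le_mul_right a hdiv1
    rw [mul_comm N r] at h2
    exact Nat.le_of_mul_le_mul_left h2 (by omega)
  -- m ≤ N / 2
  have hmhalf : m ≤ N / 2 := by
    rw [Nat.le_div_iff_mul_le (by omega)]
    calc m * 2 ≤ a * m := by
          have := Nat.mul_le_mul_right m ha2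
          omega
      _ ≤ N := hma
  -- the counting bound
  have hstable : ∀ s : Finset {X : Finset (Fin n) // X.card = r},
      (johnsonGraph (Fin n) r).IsStableSet (↑s : Set _) → s.card ≤ m := by
    intro s hs
    rw [hm, Nat.le_div_iff_mul_le (by omega)]
    exact aux_johnson_stable_card hr s hs
  have hcount := aux_numStableSets_le_sum hstable
  have hsum : ∑ k ∈ Finset.range (m + 1), N.choose k ≤ (m + 1) * N.choose m := by
    have h := Finset.sum_le_card_nsmul (Finset.range (m + 1))
      (fun k => N.choose k) (N.choose m)
      (fun k hk => aux_choose_mono_of_le_half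
        (by have := Finset.mem_range.1 hk; omega) hmhalf)
    rwa [Finset.card_range, smul_eq_mul] at h
  have hcount2 : numStableSets (johnsonGraph (Fin n) r) ≤ (m + 1) * N.choose m :=
    hcount.trans hsum
  -- pass to the reals
  set i := numStableSets (johnsonGraph (Fin n) r) with hi
  have hfact_pos : (0 : ℝ) < (m.factorial : ℝ) := by positivity
  have hn0 : (0 : ℝ) < (n : ℝ) := by
    have : 0 < n := by omega
    exact_mod_cast this
  have hm0 : (0 : ℝ) < (m : ℝ) := by exact_mod_cast hm1
  -- real bound on the binomial coefficient
  have hchoose : (N.choose m : ℝ) ≤ (8 * n : ℝ) ^ m := by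
    have h1 : (N.choose m : ℝ) ≤ (N : ℝ) ^ m / m.factorial :=
      Nat.choose_le_pow_div m N
    have h2 : (N : ℝ) ^ m ≤ (2 * n : ℝ) ^ m * (m : ℝ) ^ m := by
      rw [← mul_pow]
      apply pow_le_pow_left₀ (by positivity)
      calc (N : ℝ) ≤ ((2 * n * m : ℕ) : ℝ) := by exact_mod_cast hNm
        _ = 2 * (n : ℝ) * m := by push_cast; ring
        _ = 2 * (n : ℝ) * (m : ℝ) := by ring
    have h3 : (m : ℝ) ^ m / m.factorial ≤ Real.exp m := aux_pow_div_factorial_le_exp m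
    have h4 : Real.exp (m : ℝ) ≤ 4 ^ m := by
      have : Real.exp (m : ℝ) = Real.exp 1 ^ m := by
        rw [← Real.exp_nat_mul]; norm_num
      rw [this]
      apply pow_le_pow_left₀ (Real.exp_pos 1).le
      exact (Real.exp_one_lt_d9.le.trans (by norm_num))
    calc (N.choose m : ℝ) ≤ (N : ℝ) ^ m / m.factorial := h1
      _ ≤ ((2 * n : ℝ) ^ m * (m : ℝ) ^ m) / m.factorial := by gcongr
      _ = (2 * n : ℝ) ^ m * ((m : ℝ) ^ m / m.factorial) := by ring
      _ ≤ (2 * n : ℝ) ^ m * (4 : ℝ) ^ m :=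
          mul_le_mul_of_nonneg_left (h3.trans h4) (by positivity)
      _ = (8 * n : ℝ) ^ m := by rw [← mul_pow]; ring_nf
  have hi1 : 1 ≤ i := by
    have : Nonempty {s : Set {X : Finset (Fin n) // X.card = r} //
        (johnsonGraph (Fin n) r).IsStableSet s} :=
      ⟨⟨∅, fun x hx => absurd hx (Set.notMem_empty x)⟩⟩
    exact Nat.card_pos
  have hireal : (i : ℝ) ≤ (16 * n : ℝ) ^ m := by
    calc (i : ℝ) ≤ ((m + 1) * N.choose m : ℕ) := by exact_mod_cast hcount2
      _ = ((m + 1 : ℕ) : ℝ) * (N.choose m : ℝ) := by push_cast; ring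
      _ ≤ (2 : ℝ) ^ m * (8 * n : ℝ) ^ m := by
          apply mul_le_mul _ hchoose (by positivity) (by positivity)
          calc ((m + 1 : ℕ) : ℝ) ≤ ((2 ^ m : ℕ) : ℝ) := by
                exact_mod_cast (Nat.lt_two_pow_self (n := m))
            _ = (2 : ℝ) ^ m := by push_cast; ring
      _ = (16 * n : ℝ) ^ m := by rw [← mul_pow]; ring_nf
  -- take logarithms
  have hipos : (0 : ℝ) < i := by exact_mod_cast hi1
  have hlog16n : Real.logb 2 (16 * (n : ℝ)) = 4 + Real.logb 2 n := by
    rw [Real.logb_mul (by norm_num) (by positivity)]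
    congr 1
    rw [show (16 : ℝ) = 2 ^ (4 : ℕ) by norm_num, Real.logb_pow,
      Real.logb_self_eq_one (by norm_num : (1 : ℝ) < 2)]
    norm_num
  have hlogi : Real.logb 2 i ≤ (m : ℝ) * (4 + Real.logb 2 n) := by
    calc Real.logb 2 i ≤ Real.logb 2 ((16 * n : ℝ) ^ m) :=
          Real.logb_le_logb_of_le (by norm_num) hipos hireal
      _ = (m : ℝ) * Real.logb 2 (16 * (n : ℝ)) := by rw [Real.logb_pow]
      _ = (m : ℝ) * (4 + Real.logb 2 n) := by rw [hlog16n]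
  -- m ≤ N / (n - r + 1)
  have hcast_a : ((a : ℕ) : ℝ) = (n : ℝ) - r + 1 := by
    rw [haa]
    push_cast [Nat.cast_sub hrn]
    ring
  have ha_pos : (0 : ℝ) < (n : ℝ) - r + 1 := by
    rw [← hcast_a]
    exact_mod_cast (by omega : 0 < a)
  have hm_le : (m : ℝ) ≤ (N : ℝ) / ((n : ℝ) - r + 1) := by
    rw [le_div_iff₀ ha_pos, ← hcast_a]
    calc (m : ℝ) * (a : ℝ) = ((a * m : ℕ) : ℝ) := by push_cast; ring
      _ ≤ (N : ℝ) := by exact_mod_cast hma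
  have hLnn : 0 ≤ 4 + Real.logb 2 n := by
    have : 0 ≤ Real.logb 2 n :=
      Real.logb_nonneg (by norm_num) (by exact_mod_cast (by omega : 1 ≤ n))
    linarith
  calc Real.logb 2 i ≤ (m : ℝ) * (4 + Real.logb 2 n) := hlogi
    _ ≤ ((N : ℝ) / ((n : ℝ) - r + 1)) * (4 + Real.logb 2 n) :=
        mul_le_mul_of_nonneg_right hm_le hLnn

end Aux

/-- for fixed `r ≥ 1`,
`limsup_{n→∞} log i(J(n,r)) / ((C(n,r)/(n−r+1)) · log n) ≤ 1`. -/
theorem limsup_log_johnson_stableSets_fixed_rank (r : ℕ) (hr : 1 ≤ r) :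
    Filter.limsup
      (fun n : ℕ =>
        Real.logb 2 (numStableSets (johnsonGraph (Fin n) r)) /
          (((n.choose r : ℝ) / ((n : ℝ) - r + 1)) * Real.logb 2 n))
      Filter.atTop ≤ 1 := by
  have hnonneg : ∀ᶠ n : ℕ in Filter.atTop, 0 ≤
      Real.logb 2 (numStableSets (johnsonGraph (Fin n) r)) /
        (((n.choose r : ℝ) / ((n : ℝ) - r + 1)) * Real.logb 2 n) := by
    filter_upwards [Filter.eventually_ge_atTop (4 * r + 4)] with n hn
    have hi1 : 1 ≤ numStableSets (johnsonGraph (Fin n) r) := by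
      have : Nonempty {s : Set {X : Finset (Fin n) // X.card = r} //
          (johnsonGraph (Fin n) r).IsStableSet s} :=
        ⟨⟨∅, fun x hx => absurd hx (Set.notMem_empty x)⟩⟩
      exact Nat.card_pos
    apply div_nonneg
    · exact Real.logb_nonneg (by norm_num) (by exact_mod_cast hi1)
    · apply mul_nonneg
      · apply div_nonneg (by positivity)
        have : (r : ℝ) ≤ n := by exact_mod_cast (by omega : r ≤ n)
        linarith
      · exact Real.logb_nonneg (by norm_num)
          (by exact_mod_cast (by omega : 1 ≤ n))
  refine le_of_forall_gt_imp_ge_of_dense fun c hc => ?_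
  have hε : (0 : ℝ) < c - 1 := by linarith
  apply Filter.limsup_le_of_le
    (Filter.isCoboundedUnder_le_of_eventually_le Filter.atTop hnonneg)
  have hL : ∀ᶠ n : ℕ in Filter.atTop, 4 / (c - 1) ≤ Real.logb 2 n := by
    have ht : Filter.Tendsto (fun n : ℕ => Real.logb 2 n)
        Filter.atTop Filter.atTop :=
      (Real.tendsto_logb_atTop (by norm_num)).comp
        tendsto_natCast_atTop_atTop
    exact ht.eventually_ge_atTop _
  filter_upwards [Filter.eventually_ge_atTop (4 * r + 4), hL] with n hn hLn
  have hrn : r ≤ n := by omega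
  have h2n : 1 < n := by omega
  have hLpos : 0 < Real.logb 2 n := by
    apply Real.logb_pos (by norm_num)
    exact_mod_cast h2n
  have ha_pos : (0 : ℝ) < (n : ℝ) - r + 1 := by
    have : (r : ℝ) ≤ n := by exact_mod_cast hrn
    linarith
  have hN_pos : (0 : ℝ) < (n.choose r : ℝ) := by
    exact_mod_cast Nat.choose_pos hrn
  have hαC : (0 : ℝ) < (n.choose r : ℝ) / ((n : ℝ) - r + 1) :=
    div_pos hN_pos ha_pos
  have hD : (0 : ℝ) < ((n.choose r : ℝ) / ((n : ℝ) - r + 1)) * Real.logb 2 n :=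
    mul_pos hαC hLpos
  rw [div_le_iff₀ hD]
  have hkey := aux_key_bound r hr n hn
  have hstep : ((n.choose r : ℝ) / ((n : ℝ) - r + 1)) * (4 + Real.logb 2 n) ≤
      c * (((n.choose r : ℝ) / ((n : ℝ) - r + 1)) * Real.logb 2 n) := by
    have h4 : 4 ≤ (c - 1) * Real.logb 2 n := by
      rw [mul_comm]
      exact (div_le_iff₀ hε).mp hLn
    have h5 : 4 + Real.logb 2 n ≤ c * Real.logb 2 n := by nlinarith
    calc ((n.choose r : ℝ) / ((n : ℝ) - r + 1)) * (4 + Real.logb 2 n) ≤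
        ((n.choose r : ℝ) / ((n : ℝ) - r + 1)) * (c * Real.logb 2 n) :=
          mul_le_mul_of_nonneg_left h5 hαC.le
      _ = c * (((n.choose r : ℝ) / ((n : ℝ) - r + 1)) * Real.logb 2 n) := by ring
  exact hkey.trans hstep
end

section
/- For all integers n and r with 0 < r < n, the number s_{n,r} of sparse paving matroids of rank r on the ground set {1,...,n} equals the number i(J(n,r)) of stable sets in the Johnson graph J(n,r). -/
open Filter
open scoped symmDiff

variable {α : Type*}

section SparsePavingProof

open Set Matroid

variable {n r : ℕ}

private lemma Matroid.rnk_eq_ncard_base {α : Type*} {M : Matroid α} {B : Set α}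
    (hB : M.IsBase B) : M.rnk = B.ncard := by
  have hset : {k | ∃ B', M.IsBase B' ∧ B'.ncard = k} = {B.ncard} := by
    ext k
    constructor
    · rintro ⟨B', hB', rfl⟩
      exact hB'.ncard_eq_ncard_of_isBase hB
    · rintro rfl
      exact ⟨B, hB, rfl⟩
  rw [Matroid.rnk, hset, csSup_singleton]

private lemma exists_circuitSet_subset {M : Matroid (Fin n)} :
    ∀ k (D : Set (Fin n)), D.ncard ≤ k → M.Dep D → ∃ C, C ⊆ D ∧ M.IsCircuitSet C := by
  intro k
  induction k with
  | zero =>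
    intro D hcard hD
    have hD0 : D = ∅ := by
      rw [← Set.ncard_eq_zero (Set.toFinite D)]; omega
    subst hD0
    exact absurd M.empty_indep hD.not_indep
  | succ k ih =>
    intro D hcard hD
    by_cases h : ∀ D' ⊂ D, M.Indep D'
    · exact ⟨D, subset_rfl, hD, h⟩
    · push_neg at h
      obtain ⟨D', hss, hni⟩ := h
      have hlt : D'.ncard < D.ncard := Set.ncard_lt_ncard hss (Set.toFinite D)
      obtain ⟨C, hCD, hC⟩ := ih D' (by omega) ⟨hni, hss.subset.trans hD.subset_ground⟩
      exact ⟨C, hCD.trans hss.subset, hC⟩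

private lemma Matroid.Paving.rnk_le_ncard_of_dep {M : Matroid (Fin n)} (hP : M.Paving)
    {D : Set (Fin n)} (hD : M.Dep D) : M.rnk ≤ D.ncard := by
  obtain ⟨C, hCD, hC⟩ := exists_circuitSet_subset D.ncard D le_rfl hD
  exact (hP C hC).trans (Set.ncard_le_ncard hCD (Set.toFinite D))

private lemma rnk_dual_eq {M : Matroid (Fin n)} (hE : M.E = Set.univ) :
    M✶.rnk = n - M.rnk := by
  obtain ⟨B, hB⟩ := M.exists_isBase
  have hB' : M✶.IsBase (M.E \ B) := hB.compl_isBase_dual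
  rw [Matroid.rnk_eq_ncard_base hB', Matroid.rnk_eq_ncard_base hB,
    Set.ncard_diff hB.subset_ground, hE, Set.ncard_univ, Nat.card_eq_fintype_card,
    Fintype.card_fin]

private abbrev JV (n r : ℕ) := {X : Finset (Fin n) // X.card = r}

private lemma johnson_not_adj {S : Set (JV n r)}
    (hS : (johnsonGraph (Fin n) r).IsStableSet S) {X Y : Finset (Fin n)}
    (hX : X.card = r) (hY : Y.card = r)
    (hXS : (⟨X, hX⟩ : JV n r) ∈ S) (hYS : (⟨Y, hY⟩ : JV n r) ∈ S)
    (hadj : (X ∆ Y).card = 2) : False :=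
  hS hXS hYS hadj

private lemma symmDiff_insert_insert {A : Finset (Fin n)} {x y : Fin n}
    (hx : x ∉ A) (hy : y ∉ A) (hxy : x ≠ y) :
    (insert x A) ∆ (insert y A) = {x, y} := by
  ext e
  simp only [Finset.mem_symmDiff, Finset.mem_insert, Finset.mem_singleton]
  constructor
  · rintro (⟨h1, h2⟩ | ⟨h1, h2⟩)
    · rcases h1 with rfl | h1
      · exact Or.inl rfl
      · exact absurd (Or.inr h1) h2
    · rcases h1 with rfl | h1
      · exact Or.inr rfl
      · exact absurd (Or.inr h1) h2
  · rintro (rfl | rfl)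
    · exact Or.inl ⟨Or.inl rfl, by rintro (rfl | h); exacts [hxy rfl, hx h]⟩
    · exact Or.inr ⟨Or.inl rfl, by rintro (rfl | h); exacts [hxy.symm rfl, hy h]⟩

private lemma exists_good_ext {S : Set (JV n r)}
    (hS : (johnsonGraph (Fin n) r).IsStableSet S)
    (A T : Finset (Fin n)) (hA : A.card + 1 = r) (hAT : A ⊆ T) (hT : r + 1 ≤ T.card) :
    ∃ X : Finset (Fin n), ∃ h : X.card = r,
      A ⊆ X ∧ X ⊆ T ∧ (⟨X, h⟩ : JV n r) ∉ S := by
  have hcd : 1 < (T \ A).card := by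
    have h1 := Finset.card_sdiff_of_subset hAT
    have h2 := Finset.card_le_card hAT
    omega
  obtain ⟨x, hx, y, hy, hxy⟩ := Finset.one_lt_card.mp hcd
  obtain ⟨hxT, hxA⟩ := Finset.mem_sdiff.mp hx
  obtain ⟨hyT, hyA⟩ := Finset.mem_sdiff.mp hy
  have hX1 : (insert x A).card = r := by
    rw [Finset.card_insert_of_notMem hxA]; omega
  have hX2 : (insert y A).card = r := by
    rw [Finset.card_insert_of_notMem hyA]; omega
  by_cases h1 : (⟨insert x A, hX1⟩ : JV n r) ∈ S
  · by_cases h2 : (⟨insert y A, hX2⟩ : JV n r) ∈ S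
    · refine absurd (johnson_not_adj hS hX1 hX2 h1 h2 ?_) not_false
      rw [symmDiff_insert_insert hxA hyA hxy,
        Finset.card_insert_of_notMem (by simpa using hxy), Finset.card_singleton]
    · exact ⟨insert y A, hX2, Finset.subset_insert _ _, Finset.insert_subset hyT hAT, h2⟩
  · exact ⟨insert x A, hX1, Finset.subset_insert _ _, Finset.insert_subset hxT hAT, h1⟩

private def JIndep (n r : ℕ) (S : Set (JV n r)) (I : Set (Fin n)) : Prop :=
  ∃ X : Finset (Fin n), ∃ h : X.card = r, (⟨X, h⟩ : JV n r) ∉ S ∧ I ⊆ ↑X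

private lemma JIndep.subset {S : Set (JV n r)} {I J : Set (Fin n)}
    (hJ : JIndep n r S J) (hIJ : I ⊆ J) : JIndep n r S I := by
  obtain ⟨X, h, hns, hsub⟩ := hJ
  exact ⟨X, h, hns, hIJ.trans hsub⟩

private lemma JIndep.ncard_le {S : Set (JV n r)} {I : Set (Fin n)}
    (hI : JIndep n r S I) : I.ncard ≤ r := by
  obtain ⟨X, h, _, hsub⟩ := hI
  have h2 := Set.ncard_le_ncard hsub (Set.toFinite _)
  rwa [Set.ncard_coe_finset, h] at h2

private lemma jindep_small {S : Set (JV n r)}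
    (hS : (johnsonGraph (Fin n) r).IsStableSet S) (hrn : r < n)
    {I : Set (Fin n)} (hI : I.ncard + 1 ≤ r) : JIndep n r S I := by
  classical
  set F : Finset (Fin n) := (Set.toFinite I).toFinset with hF
  have hFc : F.card = I.ncard := (Set.ncard_eq_toFinset_card I (Set.toFinite I)).symm
  obtain ⟨A, hFA, hAu, hAc⟩ := Finset.exists_subsuperset_card_eq (Finset.subset_univ F)
    (by omega : F.card ≤ r - 1) (by simp only [Finset.card_fin]; omega)
  obtain ⟨X, hXc, hAX, -, hXS⟩ := exists_good_ext hS A Finset.univ (by omega)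
    (Finset.subset_univ A) (by simp only [Finset.card_fin]; omega)
  refine ⟨X, hXc, hXS, ?_⟩
  intro e he
  exact hAX (hFA (by simpa [hF] using he))

private lemma jindep_r_iff {S : Set (JV n r)} {X : Finset (Fin n)} (hX : X.card = r) :
    JIndep n r S ↑X ↔ (⟨X, hX⟩ : JV n r) ∉ S := by
  constructor
  · rintro ⟨Y, hY, hns, hsub⟩
    have hXY : X = Y := Finset.eq_of_subset_of_card_le (Finset.coe_subset.mp hsub) (by omega)
    subst hXY
    exact hns
  · intro h
    exact ⟨X, hX, h, subset_rfl⟩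

private lemma jindep_aug {S : Set (JV n r)}
    (hS : (johnsonGraph (Fin n) r).IsStableSet S) (hrn : r < n)
    {I J : Set (Fin n)} (hI : JIndep n r S I) (hJ : JIndep n r S J)
    (hlt : I.ncard < J.ncard) :
    ∃ e ∈ J, e ∉ I ∧ JIndep n r S (insert e I) := by
  classical
  rcases lt_or_ge (I.ncard + 1) r with hc | hc
  · obtain ⟨e, heJ, heI⟩ := Set.exists_mem_notMem_of_ncard_lt_ncard hlt
    refine ⟨e, heJ, heI, jindep_small hS hrn ?_⟩
    rw [Set.ncard_insert_of_notMem heI (Set.toFinite I)]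
    omega
  · have hIr : I.ncard + 1 = r := by
      have h1 := hI.ncard_le
      have h2 := hJ.ncard_le
      omega
    have hJr : J.ncard = r := by
      have h2 := hJ.ncard_le
      omega
    by_contra hcon
    push_neg at hcon
    set I0 : Finset (Fin n) := (Set.toFinite I).toFinset with hI0
    have hI0coe : (↑I0 : Set (Fin n)) = I := Set.Finite.coe_toFinset _
    have hI0c : I0.card = I.ncard := (Set.ncard_eq_toFinset_card I (Set.toFinite I)).symm
    by_cases hIJ : I ⊆ J
    · obtain ⟨e, heJ, heI⟩ := Set.exists_mem_notMem_of_ncard_lt_ncard hlt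
      exact hcon e heJ heI (hJ.subset (Set.insert_subset heJ hIJ))
    · obtain ⟨f, hfI, hfJ⟩ := Set.not_subset.mp hIJ
      have hne' : J ∩ I ≠ I := fun h => hfJ (by rw [← h] at hfI; exact hfI.1)
      have hint : (J ∩ I).ncard < I.ncard :=
        Set.ncard_lt_ncard (Set.inter_subset_right.ssubset_of_ne hne') (Set.toFinite I)
      have hcard_diff : 1 < (J \ I).ncard := by
        have h3 := Set.ncard_inter_add_ncard_diff_eq_ncard J I (Set.toFinite J)
        omega
      obtain ⟨e1, he1, e2, he2, hne⟩ := (Set.one_lt_ncard (Set.toFinite _)).mp hcard_diff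
      obtain ⟨he1J, he1I⟩ := he1
      obtain ⟨he2J, he2I⟩ := he2
      have hK : ∀ e, e ∈ J → e ∉ I →
          ∃ hc : (insert e I0).card = r, (⟨insert e I0, hc⟩ : JV n r) ∈ S := by
        intro e heJ heI
        have heI0 : e ∉ I0 := by rwa [hI0, Set.Finite.mem_toFinset]
        have hc : (insert e I0).card = r := by
          rw [Finset.card_insert_of_notMem heI0]; omega
        refine ⟨hc, ?_⟩
        by_contra hmem
        refine hcon e heJ heI ⟨insert e I0, hc, hmem, ?_⟩
        rw [Finset.coe_insert, hI0coe]
      obtain ⟨hc1, hm1⟩ := hK e1 he1J he1I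
      obtain ⟨hc2, hm2⟩ := hK e2 he2J he2I
      refine johnson_not_adj hS hc1 hc2 hm1 hm2 ?_
      rw [symmDiff_insert_insert (by rwa [hI0, Set.Finite.mem_toFinset])
        (by rwa [hI0, Set.Finite.mem_toFinset]) hne,
        Finset.card_insert_of_notMem (by simpa using hne), Finset.card_singleton]

private noncomputable def jMatroid (S : Set (JV n r))
    (hS : (johnsonGraph (Fin n) r).IsStableSet S) (hr0 : 0 < r) (hrn : r < n) :
    Matroid (Fin n) :=
  (IndepMatroid.ofFinite (Set.finite_univ) (JIndep n r S)
    (jindep_small hS hrn (by rw [Set.ncard_empty]; omega))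
    (fun _ _ hJ hIJ => hJ.subset hIJ)
    (fun _ _ hI hJ hlt => jindep_aug hS hrn hI hJ hlt)
    (fun I _ => Set.subset_univ I)).matroid

private lemma jMatroid_indep {S : Set (JV n r)} {hS hr0 hrn} {I : Set (Fin n)} :
    (jMatroid S hS hr0 hrn).Indep I ↔ JIndep n r S I := by
  simp [jMatroid]

private lemma jMatroid_E {S : Set (JV n r)} {hS hr0 hrn} :
    (jMatroid S hS hr0 hrn).E = Set.univ := rfl

private lemma jMatroid_base_iff {S : Set (JV n r)} {hS hr0 hrn} {B : Set (Fin n)} :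
    (jMatroid S hS hr0 hrn).IsBase B ↔
      ∃ X : Finset (Fin n), ∃ h : X.card = r, (⟨X, h⟩ : JV n r) ∉ S ∧ B = ↑X := by
  rw [Matroid.isBase_iff_maximal_indep]
  constructor
  · rintro ⟨hBi, hmax⟩
    rw [jMatroid_indep] at hBi
    obtain ⟨X, h, hns, hsub⟩ := hBi
    refine ⟨X, h, hns, ?_⟩
    have hXB : (↑X : Set (Fin n)) ⊆ B :=
      hmax (y := ↑X) ((jMatroid_indep).mpr ⟨X, h, hns, subset_rfl⟩) hsub
    exact hsub.antisymm hXB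
  · rintro ⟨X, h, hns, rfl⟩
    refine ⟨(jMatroid_indep).mpr ⟨X, h, hns, subset_rfl⟩, fun I hI hXI => ?_⟩
    rw [jMatroid_indep] at hI
    have hle : I.ncard ≤ r := hI.ncard_le
    have : (↑X : Set (Fin n)) = I := Set.eq_of_subset_of_ncard_le hXI
      (by rw [Set.ncard_coe_finset, h]; exact hle) (Set.toFinite I)
    exact this.ge

private lemma jMatroid_rnk {S : Set (JV n r)} {hS hr0 hrn} :
    (jMatroid S hS hr0 hrn).rnk = r := by
  obtain ⟨B, hB⟩ := (jMatroid S hS hr0 hrn).exists_isBase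
  rw [Matroid.rnk_eq_ncard_base hB]
  obtain ⟨X, h, hns, rfl⟩ := jMatroid_base_iff.mp hB
  rw [Set.ncard_coe_finset, h]

private lemma jMatroid_paving {S : Set (JV n r)} {hS} {hr0 : 0 < r} {hrn : r < n} :
    (jMatroid S hS hr0 hrn).Paving := by
  intro C hC
  rw [jMatroid_rnk]
  by_contra hlt
  push_neg at hlt
  exact hC.1.not_indep ((jMatroid_indep).mpr (jindep_small hS hrn (by omega)))

private lemma jMatroid_dual_indep {S : Set (JV n r)} {hS} {hr0 : 0 < r} {hrn : r < n}
    {A : Set (Fin n)} (hA : A.ncard + r + 1 ≤ n) :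
    (jMatroid S hS hr0 hrn)✶.Indep A := by
  classical
  rw [Matroid.dual_indep_iff_exists']
  refine ⟨by rw [jMatroid_E]; exact Set.subset_univ A, ?_⟩
  set T : Finset (Fin n) := (Set.toFinite Aᶜ).toFinset with hT
  have hTA : ∀ e ∈ T, e ∉ A := by
    intro e he
    rw [hT, Set.Finite.mem_toFinset] at he
    exact he
  have hTcard : r + 1 ≤ T.card := by
    have h1 : T.card = Aᶜ.ncard := (Set.ncard_eq_toFinset_card _ _).symm
    have h2 : Aᶜ.ncard = n - A.ncard := by
      rw [Set.compl_eq_univ_diff, Set.ncard_diff (Set.subset_univ A), Set.ncard_univ,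
        Nat.card_eq_fintype_card, Fintype.card_fin]
    omega
  obtain ⟨A0, -, hA0T, hA0c⟩ := Finset.exists_subsuperset_card_eq (Finset.empty_subset T)
    (by simp) (by omega : r - 1 ≤ T.card)
  obtain ⟨X, hXc, -, hXT, hXS⟩ := exists_good_ext hS A0 T (by omega) hA0T hTcard
  refine ⟨↑X, jMatroid_base_iff.mpr ⟨X, hXc, hXS, rfl⟩, ?_⟩
  exact Set.disjoint_left.mpr fun a haA haX => hTA a (hXT haX) haA

private lemma jMatroid_dual_paving {S : Set (JV n r)} {hS} {hr0 : 0 < r} {hrn : r < n} :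
    (jMatroid S hS hr0 hrn)✶.Paving := by
  intro C hC
  rw [rnk_dual_eq jMatroid_E, jMatroid_rnk]
  by_contra hlt
  push_neg at hlt
  exact hC.1.not_indep (jMatroid_dual_indep (by omega))

private lemma stable_of_sparsePaving {M : Matroid (Fin n)} (hE : M.E = Set.univ)
    (hrk : M.rnk = r) (hsp : M.SparsePaving) (hr0 : 0 < r) (hrn : r < n) :
    (johnsonGraph (Fin n) r).IsStableSet {v : JV n r | ¬ M.IsBase ↑v.1} := by
  rintro ⟨X, hX⟩ hXm ⟨Y, hY⟩ hYm hadj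
  simp only [Set.mem_setOf_eq] at hXm hYm
  have hadj' : (X ∆ Y).card = 2 := hadj
  have hbase_card : ∀ B, M.IsBase B → B.ncard = r := fun B hB => by
    rw [← hrk, Matroid.rnk_eq_ncard_base hB]
  have hindep_base : ∀ I : Set (Fin n), M.Indep I → I.ncard = r → M.IsBase I := by
    intro I hI hIc
    obtain ⟨B, hB, hIB⟩ := hI.exists_isBase_superset
    have hIB' : I = B := Set.eq_of_subset_of_ncard_le hIB
      (by rw [hbase_card B hB, hIc]) (Set.toFinite B)
    rwa [hIB']
  have hdep_ge : ∀ D : Set (Fin n), M.Dep D → r ≤ D.ncard := fun D hD => by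
    rw [← hrk]; exact hsp.1.rnk_le_ncard_of_dep hD
  have hdepX : M.Dep ↑X := by
    rw [Matroid.dep_iff]
    exact ⟨fun hind => hXm (hindep_base _ hind (by rw [Set.ncard_coe_finset, hX])),
      by rw [hE]; exact Set.subset_univ _⟩
  have hdepY : M.Dep ↑Y := by
    rw [Matroid.dep_iff]
    exact ⟨fun hind => hYm (hindep_base _ hind (by rw [Set.ncard_coe_finset, hY])),
      by rw [hE]; exact Set.subset_univ _⟩
  have h2 : (X \ Y).card + (Y \ X).card = 2 := by
    rw [← Finset.card_union_of_disjoint disjoint_sdiff_sdiff, ← Finset.sup_eq_union,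
      ← symmDiff_def, hadj']
  have hxyc : (X ∩ Y).card + (X \ Y).card = r := by
    rw [Finset.card_inter_add_card_sdiff, hX]
  have hyxc : (Y ∩ X).card + (Y \ X).card = r := by
    rw [Finset.card_inter_add_card_sdiff, hY]
  have hic : (X ∩ Y).card = (Y ∩ X).card := by rw [Finset.inter_comm]
  obtain ⟨a, ha⟩ := Finset.card_eq_one.mp (by omega : (X \ Y).card = 1)
  obtain ⟨b, hb⟩ := Finset.card_eq_one.mp (by omega : (Y \ X).card = 1)
  have haXY : a ∈ X \ Y := ha ▸ Finset.mem_singleton_self a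
  have hbYX : b ∈ Y \ X := hb ▸ Finset.mem_singleton_self b
  obtain ⟨haX, haY⟩ := Finset.mem_sdiff.mp haXY
  obtain ⟨hbY, hbX⟩ := Finset.mem_sdiff.mp hbYX
  have hXi : X = insert a (X ∩ Y) := by
    ext e
    simp only [Finset.mem_insert, Finset.mem_inter]
    constructor
    · intro he
      by_cases heY : e ∈ Y
      · exact Or.inr ⟨he, heY⟩
      · have heXY : e ∈ X \ Y := Finset.mem_sdiff.mpr ⟨he, heY⟩
        rw [ha, Finset.mem_singleton] at heXY
        exact Or.inl heXY
    · rintro (rfl | ⟨h, _⟩)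
      exacts [haX, h]
  have hYi : Y = insert b (X ∩ Y) := by
    ext e
    simp only [Finset.mem_insert, Finset.mem_inter]
    constructor
    · intro he
      by_cases heX : e ∈ X
      · exact Or.inr ⟨heX, he⟩
      · have heYX : e ∈ Y \ X := Finset.mem_sdiff.mpr ⟨he, heX⟩
        rw [hb, Finset.mem_singleton] at heYX
        exact Or.inl heYX
    · rintro (rfl | ⟨_, h⟩)
      exacts [hbY, h]
  set A : Set (Fin n) := ↑(X ∩ Y) with hA
  have hAc : A.ncard + 1 = r := by
    rw [hA, Set.ncard_coe_finset]; omega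
  have hAE : A ⊆ M.E := by rw [hE]; exact Set.subset_univ _
  have hAind : M.Indep A := by
    rw [← Matroid.not_dep_iff hAE]
    intro hdep
    have := hdep_ge A hdep
    omega
  have ha_cl : a ∈ M.closure A := by
    rw [hAind.mem_closure_iff]
    left
    have hiX : insert a A = ↑X := by rw [hA, ← Finset.coe_insert, ← hXi]
    rw [hiX]; exact hdepX
  have hb_cl : b ∈ M.closure A := by
    rw [hAind.mem_closure_iff]
    left
    have hiY : insert b A = ↑Y := by rw [hA, ← Finset.coe_insert, ← hYi]
    rw [hiY]; exact hdepY
  -- the complement of Y is a cocircuit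
  have hYcE : (Set.univ \ ↑Y : Set (Fin n)) ⊆ M✶.E := by
    rw [Matroid.dual_ground, hE]; exact Set.subset_univ _
  have hYc_card : (Set.univ \ (↑Y : Set (Fin n))).ncard = n - r := by
    rw [Set.ncard_diff (Set.subset_univ _), Set.ncard_univ, Nat.card_eq_fintype_card,
      Fintype.card_fin, Set.ncard_coe_finset, hY]
  have hYc_dep : M✶.Dep (Set.univ \ ↑Y) := by
    rw [Matroid.dep_iff]
    refine ⟨fun hind => ?_, hYcE⟩
    rw [Matroid.dual_indep_iff_exists'] at hind
    obtain ⟨-, B0, hB0, hdisj⟩ := hind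
    have hB0Y : B0 ⊆ ↑Y := by
      intro e heB
      by_contra heY
      exact Set.disjoint_left.mp hdisj ⟨trivial, heY⟩ heB
    have hB0eq : B0 = ↑Y := Set.eq_of_subset_of_ncard_le hB0Y
      (by rw [Set.ncard_coe_finset, hY, hbase_card B0 hB0]) (Set.toFinite _)
    exact hYm (hB0eq ▸ hB0)
  have hrkdual : M✶.rnk = n - r := by rw [rnk_dual_eq hE, hrk]
  obtain ⟨C, hCsub, hC⟩ := exists_circuitSet_subset _ _ le_rfl hYc_dep
  have hCeq : C = Set.univ \ ↑Y := by
    refine Set.eq_of_subset_of_ncard_le hCsub ?_ (Set.toFinite _)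
    rw [hYc_card, ← hrkdual]
    exact hsp.2 C hC
  have haYc : a ∈ Set.univ \ (↑Y : Set (Fin n)) := ⟨trivial, by simpa using haY⟩
  have hssub : (Set.univ \ ↑Y) \ {a} ⊂ Set.univ \ (↑Y : Set (Fin n)) :=
    Set.sdiff_singleton_ssubset.mpr haYc
  have hind2 : M✶.Indep ((Set.univ \ ↑Y) \ {a}) := hC.2 _ (hCeq ▸ hssub)
  rw [Matroid.dual_indep_iff_exists'] at hind2
  obtain ⟨-, B0, hB0, hdisj⟩ := hind2
  have hB0sub : B0 ⊆ M.closure A := by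
    intro e heB
    have heY : (e ∈ (↑Y : Set (Fin n))) ∨ e = a := by
      by_contra hcontra
      push_neg at hcontra
      exact Set.disjoint_left.mp hdisj ⟨⟨trivial, hcontra.1⟩, by simp [hcontra.2]⟩ heB
    rcases heY with he | rfl
    · have : e ∈ insert b A := by
        rw [hA, ← Finset.coe_insert, ← hYi]; exact he
      rcases this with rfl | heA
      · exact hb_cl
      · exact M.subset_closure A hAE heA
    · exact ha_cl
  have hclA : M.closure A = M.E := by
    refine subset_antisymm (M.closure_subset_ground A) ?_
    rw [← hB0.closure_eq]
    calc M.closure B0 ⊆ M.closure (M.closure A) := M.closure_subset_closure hB0sub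
      _ = M.closure A := M.closure_closure A
  have hspan : M.Spanning A := by
    rw [Matroid.spanning_iff_closure_eq hAE]; exact hclA
  obtain ⟨B1, hB1, hB1A⟩ := hspan.exists_isBase_subset
  have hle := Set.ncard_le_ncard hB1A (Set.toFinite A)
  rw [hbase_card B1 hB1] at hle
  omega

private noncomputable def spEquiv (n r : ℕ) (hr0 : 0 < r) (hrn : r < n) :
    {M : Matroid (Fin n) // M.E = Set.univ ∧ M.rnk = r ∧ M.SparsePaving} ≃
      {s : Set (JV n r) // (johnsonGraph (Fin n) r).IsStableSet s} where
  toFun M := ⟨{v : JV n r | ¬ M.1.IsBase ↑v.1},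
    stable_of_sparsePaving M.2.1 M.2.2.1 M.2.2.2 hr0 hrn⟩
  invFun s := ⟨jMatroid s.1 s.2 hr0 hrn, jMatroid_E, jMatroid_rnk,
    jMatroid_paving, jMatroid_dual_paving⟩
  left_inv := by
    rintro ⟨M, hE, hrk, hsp⟩
    apply Subtype.ext
    dsimp only
    refine Matroid.ext_isBase (by rw [jMatroid_E, hE]) fun B _ => ?_
    rw [jMatroid_base_iff]
    constructor
    · rintro ⟨X, h, hns, rfl⟩
      simpa using hns
    · intro hBbase
      have hBc : B.ncard = r := by rw [← hrk, Matroid.rnk_eq_ncard_base hBbase]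
      refine ⟨(Set.toFinite B).toFinset,
        by rw [← Set.ncard_eq_toFinset_card B (Set.toFinite B)]; exact hBc, ?_, ?_⟩
      · simp only [Set.mem_setOf_eq, not_not, Set.Finite.coe_toFinset]
        exact hBbase
      · rw [Set.Finite.coe_toFinset]
  right_inv := by
    rintro ⟨s, hs⟩
    apply Subtype.ext
    dsimp only
    ext ⟨X, hX⟩
    simp only [Set.mem_setOf_eq]
    have hbase : (jMatroid s hs hr0 hrn).IsBase ↑X ↔ (⟨X, hX⟩ : JV n r) ∉ s := by
      rw [jMatroid_base_iff]
      constructor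
      · rintro ⟨Y, h, hns, hXY⟩
        have hXY' : X = Y := Finset.coe_injective hXY
        subst hXY'
        exact hns
      · intro h
        exact ⟨X, hX, h, rfl⟩
    rw [hbase, not_not]

end SparsePavingProof

/-- `s_{n,r} = i(J(n,r))` for `0 < r < n`. -/
theorem sparsePavingRk_eq_johnson_stableSets (n r : ℕ) (hr0 : 0 < r) (hrn : r < n) :
    numSparsePavingRk n r = numStableSets (johnsonGraph (Fin n) r) :=
  Nat.card_congr (spEquiv n r hr0 hrn)
end

section
/- For all sufficiently large n, the number m'_n of matroids on the ground set {1,...,n} with no loops and no coloops satisfies m'_n ≥ 2^{C(n,⌊n/2⌋)/n}. -/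
open Filter
open scoped symmDiff

variable {α : Type*}

/-! ### Auxiliary constructions -/

section Aux

open Finset

variable {n : ℕ}

/-- The sum of the elements of a finset of `Fin n`, computed in `ZMod n`. -/
def finsumZ (X : Finset (Fin n)) : ZMod n := ∑ x ∈ X, (x.val : ZMod n)

theorem key_eq [NeZero n] {c : ZMod n} {A : Finset (Finset (Fin n))}
    (hA : ∀ X ∈ A, finsumZ X = c) {I : Finset (Fin n)} {e e' : Fin n}
    (he : e ∉ I) (he' : e' ∉ I) (h1 : insert e I ∈ A) (h2 : insert e' I ∈ A) : e = e' := by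
  have hs1 : (e.val : ZMod n) + finsumZ I = c := by
    rw [← hA _ h1]; simp only [finsumZ]; rw [Finset.sum_insert he]
  have hs2 : (e'.val : ZMod n) + finsumZ I = c := by
    rw [← hA _ h2]; simp only [finsumZ]; rw [Finset.sum_insert he']
  have hv : (e.val : ZMod n) = (e'.val : ZMod n) := by
    have := hs1.trans hs2.symm
    exact add_right_cancel this
  have := congrArg ZMod.val hv
  rw [ZMod.val_cast_of_lt e.isLt, ZMod.val_cast_of_lt e'.isLt] at this
  exact Fin.ext this

/-- The independence predicate of the matroid determined by a "stable" family `A`. -/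
def IndP (A : Finset (Finset (Fin n))) (r : ℕ) (I : Finset (Fin n)) : Prop :=
  I.card ≤ r ∧ I ∉ A

theorem IndP_subset {A : Finset (Finset (Fin n))} {r : ℕ} (hcard : ∀ X ∈ A, X.card = r)
    {I J : Finset (Fin n)} (hJ : IndP A r J) (hIJ : I ⊆ J) : IndP A r I := by
  refine ⟨(card_le_card hIJ).trans hJ.1, fun hIA => ?_⟩
  have h1 : I.card = r := hcard _ hIA
  have h2 : J.card ≤ I.card := by
    have h3 := card_le_card hIJ
    have h4 := hJ.1
    omega
  have : I = J := Finset.eq_of_subset_of_card_le hIJ h2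
  exact hJ.2 (this ▸ hIA)

theorem IndP_aug [NeZero n] {A : Finset (Finset (Fin n))} {r : ℕ} {c : ZMod n}
    (hcard : ∀ X ∈ A, X.card = r) (hsum : ∀ X ∈ A, finsumZ X = c)
    {I J : Finset (Fin n)} (hI : IndP A r I) (hJ : IndP A r J) (hlt : I.card < J.card) :
    ∃ e ∈ J, e ∉ I ∧ IndP A r (insert e I) := by
  by_contra hcon
  push_neg at hcon
  have hins : ∀ e ∈ J \ I, insert e I ∈ A := by
    intro e he
    rw [Finset.mem_sdiff] at he
    have h1 : (insert e I).card ≤ r := by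
      rw [card_insert_of_notMem he.2]
      have := hJ.1
      omega
    have h2 := hcon e he.1 he.2
    rw [IndP] at h2
    push_neg at h2
    exact h2 h1
  have hne : (J \ I).Nonempty := by
    rw [sdiff_nonempty]
    intro h
    exact absurd (card_le_card h) (by omega)
  obtain ⟨e, he⟩ := hne
  have hall : ∀ e' ∈ J \ I, e' = e := fun e' he' =>
    key_eq hsum (Finset.mem_sdiff.1 he').2 (Finset.mem_sdiff.1 he).2 (hins _ he') (hins _ he)
  have hsub : J ⊆ insert e I := by
    intro x hx
    by_cases hxI : x ∈ I
    · exact mem_insert_of_mem hxI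
    · exact (hall x (Finset.mem_sdiff.2 ⟨hx, hxI⟩)) ▸ mem_insert_self _ _
  have hcard' : (insert e I).card ≤ J.card := by
    rw [card_insert_of_notMem (Finset.mem_sdiff.1 he).2]
    omega
  have : J = insert e I := Finset.eq_of_subset_of_card_le hsub hcard'
  exact hJ.2 (this ▸ hins e he)

/-- The matroid on `Fin n` whose independent sets are the sets of size at most `r`
not belonging to `A`, where `A` is a family of `r`-sets of constant `ZMod n` element sum. -/
noncomputable def spM [NeZero n] (r : ℕ) (c : ZMod n) (A : Finset (Finset (Fin n)))
    (hr : 1 ≤ r) (hcard : ∀ X ∈ A, X.card = r) (hsum : ∀ X ∈ A, finsumZ X = c) :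
    Matroid (Fin n) :=
  (IndepMatroid.ofFinset Set.univ (IndP A r)
    (indep_empty := ⟨by simp, fun h => by have := hcard _ h; simp at this; omega⟩)
    (indep_subset := fun I J hJ hIJ => IndP_subset hcard hJ hIJ)
    (indep_aug := fun I J hI hJ hlt => IndP_aug hcard hsum hI hJ hlt)
    (subset_ground := fun I _ => Set.subset_univ _)).matroid

variable [NeZero n] {r : ℕ} {c : ZMod n} {A : Finset (Finset (Fin n))}
  {hr : 1 ≤ r} {hcard : ∀ X ∈ A, X.card = r} {hsum : ∀ X ∈ A, finsumZ X = c}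

theorem spM_E : (spM r c A hr hcard hsum).E = Set.univ := rfl

theorem spM_indep {I : Finset (Fin n)} :
    (spM r c A hr hcard hsum).Indep ↑I ↔ IndP A r I := by
  rw [spM, IndepMatroid.matroid_indep_iff]; exact IndepMatroid.ofFinset_indep _ _ _ _ _ _

theorem spM_indep' {X : Set (Fin n)} :
    (spM r c A hr hcard hsum).Indep X ↔ ∀ J : Finset (Fin n), ↑J ⊆ X → IndP A r J := by
  rw [spM, IndepMatroid.matroid_indep_iff]; exact IndepMatroid.ofFinset_indep' _ _ _ _ _ _

theorem spM_base {B : Finset (Fin n)} (hB : B.card = r) (hBA : B ∉ A) :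
    (spM r c A hr hcard hsum).IsBase ↑B := by
  rw [Matroid.isBase_iff_maximal_indep]
  refine ⟨spM_indep.2 ⟨hB.le, hBA⟩, fun X hX hBX => ?_⟩
  intro x hx
  by_contra hxB
  have hxB' : x ∉ B := by simpa using hxB
  have h1 : ((insert x B : Finset (Fin n)) : Set (Fin n)) ⊆ X := by
    rw [coe_insert]
    exact Set.insert_subset hx hBX
  have h2 := (spM_indep'.1 hX _ h1).1
  rw [card_insert_of_notMem hxB'] at h2
  omega

theorem spM_loopFree (hr2 : 2 ≤ r) : (spM r c A hr hcard hsum).LoopFree := by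
  intro e _
  have h : ({e} : Set (Fin n)) = (({e} : Finset (Fin n)) : Set (Fin n)) := by simp
  rw [h, spM_indep]
  exact ⟨by simp; omega, fun hmem => by have := hcard _ hmem; simp at this; omega⟩

theorem spM_coloopFree (hrn : r + 2 ≤ n) : (spM r c A hr hcard hsum).ColoopFree := by
  intro e _
  -- find a basis avoiding e
  have hcardE : r + 1 ≤ (Finset.univ.erase e).card := by
    rw [card_erase_of_mem (mem_univ e), card_univ, Fintype.card_fin]
    omega
  obtain ⟨K, hKsub, hK⟩ := Finset.exists_subset_card_eq hcardE
  have hKne : ∃ a ∈ K, ∃ b ∈ K, a ≠ b := Finset.one_lt_card.1 (by omega)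
  obtain ⟨a, ha, b, hb, hab⟩ := hKne
  have hIa : K.erase a = insert b ((K.erase a).erase b) := by
    rw [Finset.insert_erase (Finset.mem_erase.2 ⟨hab.symm, hb⟩)]
  have hIb : K.erase b = insert a ((K.erase a).erase b) := by
    rw [Finset.erase_right_comm]
    rw [Finset.insert_erase (Finset.mem_erase.2 ⟨hab, ha⟩)]
  have hbI : b ∉ (K.erase a).erase b := Finset.notMem_erase _ _
  have haI : a ∉ (K.erase a).erase b := fun h => Finset.notMem_erase a K (Finset.mem_of_mem_erase h)
  -- at least one of K.erase a, K.erase b is not in A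
  have hone : K.erase a ∉ A ∨ K.erase b ∉ A := by
    by_contra hcon
    push_neg at hcon
    have := key_eq hsum hbI haI (hIa ▸ hcon.1) (hIb ▸ hcon.2)
    exact hab this.symm
  obtain ⟨B, hBK, hBA⟩ : ∃ B, (B = K.erase a ∨ B = K.erase b) ∧ B ∉ A := by
    rcases hone with h | h
    · exact ⟨K.erase a, Or.inl rfl, h⟩
    · exact ⟨K.erase b, Or.inr rfl, h⟩
  have hBcard : B.card = r := by
    rcases hBK with h | h <;>
      simp [h, card_erase_of_mem, ha, hb, hK]
  have heB : e ∉ B := by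
    have hBsub : B ⊆ Finset.univ.erase e := by
      rcases hBK with h | h <;> exact h ▸ (Finset.erase_subset _ _).trans hKsub
    intro h
    exact Finset.notMem_erase e Finset.univ (hBsub h)
  refine Matroid.dual_indep_iff_exists'.2 ⟨by simp [spM_E], ↑B, spM_base hBcard hBA, ?_⟩
  rw [Set.disjoint_singleton_left]
  simpa using heB

theorem spM_mem_iff {X : Finset (Fin n)} :
    X ∈ A ↔ X.card = r ∧ ¬ (spM r c A hr hcard hsum).Indep ↑X := by
  constructor
  · intro hX
    refine ⟨hcard _ hX, fun h => ?_⟩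
    exact (spM_indep.1 h).2 hX
  · rintro ⟨hXr, hX⟩
    rw [spM_indep, IndP] at hX
    push_neg at hX
    exact hX hXr.le

end Aux

/-- for all sufficiently large `n`, `m'_n ≥ 2^{C(n,⌊n/2⌋)/n}`. -/
theorem noLoopColoop_lower :
    ∀ᶠ n : ℕ in Filter.atTop,
      (2 : ℝ) ^ ((n.choose (n / 2) : ℝ) / n) ≤ (numMatroidsNoLoopColoop n : ℝ) := by
  filter_upwards [Filter.eventually_ge_atTop 4] with n hn
  haveI : NeZero n := ⟨by omega⟩
  set r := n / 2 with hrdef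
  have hr1 : 1 ≤ r := by omega
  have hr2 : 2 ≤ r := by omega
  have hrn : r + 2 ≤ n := by omega
  classical
  -- the family of r-sets with element sum c
  set Sc : ZMod n → Finset (Finset (Fin n)) :=
    fun c => Finset.univ.filter (fun X => X.card = r ∧ finsumZ X = c) with hScdef
  -- pigeonhole: some class has size at least choose n r / n
  have hsum : ∑ c : ZMod n, (Sc c).card = n.choose r := by
    have h1 : (Finset.univ.filter (fun X : Finset (Fin n) => X.card = r)).card
        = ∑ c : ZMod n, (Sc c).card := by
      rw [Finset.card_eq_sum_card_fiberwise
        (f := finsumZ) (t := Finset.univ) (fun x _ => Finset.mem_univ _)]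
      refine Finset.sum_congr rfl fun c _ => ?_
      congr 1
      rw [Finset.filter_filter]
    rw [← h1]
    have h2 : Finset.univ.filter (fun X : Finset (Fin n) => X.card = r)
        = Finset.powersetCard r (Finset.univ : Finset (Fin n)) := by
      rw [Finset.powersetCard_eq_filter]
      refine Finset.filter_congr fun X _ => ?_
      simp
    rw [h2, Finset.card_powersetCard, Finset.card_univ, Fintype.card_fin]
  obtain ⟨c, -, hc⟩ : ∃ c ∈ (Finset.univ : Finset (ZMod n)), n.choose r ≤ n * (Sc c).card := by
    apply Finset.exists_le_of_sum_le ⟨(0 : ZMod n), Finset.mem_univ _⟩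
    rw [← Finset.mul_sum, hsum, Finset.sum_const, Finset.card_univ, ZMod.card, smul_eq_mul]
  -- properties of subsets of Sc c
  have hmem : ∀ {A : Finset (Finset (Fin n))}, A ⊆ Sc c →
      (∀ X ∈ A, X.card = r) ∧ (∀ X ∈ A, finsumZ X = c) := by
    intro A hA
    constructor <;> intro X hX <;> have := Finset.mem_filter.1 (hA hX)
    · exact this.2.1
    · exact this.2.2
  -- the matroid subtype is finite
  haveI hfinM : Finite (Matroid (Fin n)) := by
    refine Finite.of_injective
      (fun M => ((M.E, {I : Set (Fin n) | M.Indep I}) : Set (Fin n) × Set (Set (Fin n)))) ?_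
    intro M₁ M₂ h
    rw [Prod.mk.injEq] at h
    refine Matroid.ext_indep h.1 fun I _ => ?_
    have := h.2
    constructor <;> intro hI
    · have : I ∈ {I : Set (Fin n) | M₂.Indep I} := h.2 ▸ hI
      exact this
    · have : I ∈ {I : Set (Fin n) | M₁.Indep I} := h.2.symm ▸ hI
      exact this
  -- the injection from subsets of Sc c
  have hcount : 2 ^ (Sc c).card ≤ numMatroidsNoLoopColoop n := by
    rw [numMatroidsNoLoopColoop]
    have hdom : Fintype.card {A : Finset (Finset (Fin n)) // A ⊆ Sc c} = 2 ^ (Sc c).card := by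
      rw [← Finset.card_powerset]
      rw [← Fintype.card_coe]
      apply Fintype.card_congr
      exact Equiv.subtypeEquivRight fun A => (Finset.mem_powerset).symm
    rw [← hdom, ← Nat.card_eq_fintype_card]
    refine Nat.card_le_card_of_injective
      (fun A => ⟨spM r c A.1 hr1 (hmem A.2).1 (hmem A.2).2,
        rfl, spM_loopFree hr2, spM_coloopFree hrn⟩) ?_
    intro A₁ A₂ hA
    have hA' : spM r c A₁.1 hr1 (hmem A₁.2).1 (hmem A₁.2).2
        = spM r c A₂.1 hr1 (hmem A₂.2).1 (hmem A₂.2).2 := congrArg Subtype.val hA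
    apply Subtype.ext
    ext X
    rw [spM_mem_iff (hr := hr1) (hcard := (hmem A₁.2).1) (hsum := (hmem A₁.2).2), hA',
      ← spM_mem_iff (hr := hr1) (hcard := (hmem A₂.2).1) (hsum := (hmem A₂.2).2)]
  -- real arithmetic
  have hnpos : (0 : ℝ) < n := by positivity
  calc (2 : ℝ) ^ ((n.choose r : ℝ) / n) ≤ (2 : ℝ) ^ (((Sc c).card : ℕ) : ℝ) := by
        apply (Real.rpow_le_rpow_left_iff (by norm_num : (1:ℝ) < 2)).2
        rw [div_le_iff₀ hnpos]
        calc ((n.choose r : ℕ) : ℝ) ≤ ((n * (Sc c).card : ℕ) : ℝ) := by exact_mod_cast hc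
          _ = ((Sc c).card : ℝ) * n := by push_cast; ring
    _ = ((2 ^ (Sc c).card : ℕ) : ℝ) := by
        rw [Real.rpow_natCast]; push_cast; ring
    _ ≤ (numMatroidsNoLoopColoop n : ℝ) := Nat.cast_le.2 hcount
end
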